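/- arXiv:2007.09890 — 11 statements merged into one kernel-verified Lean document; each statement's English description precedes it below -/
import Mathlib

section
/- Let A ∈ ℝ^{n×d}, S ∈ ℝ^{m_S×n}, R ∈ ℝ^{m_R×d} be real matrices and k a positive integer. Then the set of matrices {A Rᵀ X S A : X ∈ ℝ^{m_R×m_S}, rank(X) ≤ k} coincides with the set of matrices Y ∈ ℝ^{n×d} of rank at most k whose row space is contained in row(SA) and whose column space is contained in col(ARᵀ). Consequently, min over rank-≤k X of ‖A Rᵀ X S A − A‖_F² equals min over rank-≤k Y with row(Y) ⊆ row(SA) and col(Y) ⊆ col(ARᵀ) of ‖Y − A‖_F². -/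
open Matrix

/-- Squared Frobenius norm of a real matrix. -/
noncomputable def frobSq {m n : Type*} [Fintype m] [Fintype n] (M : Matrix m n ℝ) : ℝ :=
  ∑ i, ∑ j, (M i j) ^ 2

/-- Row space of a real matrix: the span of its rows. -/
def rowSpace {m n : Type*} (M : Matrix m n ℝ) : Submodule ℝ (n → ℝ) :=
  Submodule.span ℝ (Set.range fun i => M i)

/-- Column space of a real matrix: the span of its columns. -/
def colSpace {m n : Type*} (M : Matrix m n ℝ) : Submodule ℝ (m → ℝ) :=
  Submodule.span ℝ (Set.range fun j => Mᵀ j)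

private theorem mulVecLin_toMatrix'' {m n : ℕ} (g : (Fin m → ℝ) →ₗ[ℝ] Fin n → ℝ) :
    (LinearMap.toMatrix' g).mulVecLin = g := by
  rw [← Matrix.toLin'_apply', Matrix.toLin'_toMatrix']

private theorem mulVecLin_inj {m n : ℕ} {M N : Matrix (Fin m) (Fin n) ℝ}
    (h : M.mulVecLin = N.mulVecLin) : M = N := by
  have := congrArg LinearMap.toMatrix' h
  rwa [← Matrix.toLin'_apply', ← Matrix.toLin'_apply',
    LinearMap.toMatrix'_toLin', LinearMap.toMatrix'_toLin'] at this

/-- Every real matrix has a generalized inverse. -/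
theorem exists_ginv {m n : ℕ} (M : Matrix (Fin m) (Fin n) ℝ) :
    ∃ G : Matrix (Fin n) (Fin m) ℝ, M * G * M = M := by
  set f := M.mulVecLin with hf
  obtain ⟨q, hq⟩ := Submodule.exists_isCompl (LinearMap.range f)
  obtain ⟨s, hs⟩ := f.rangeRestrict.exists_rightInverse_of_surjective
    (LinearMap.range_rangeRestrict f)
  set proj := (LinearMap.range f).linearProjOfIsCompl q hq
  set g := s ∘ₗ proj with hg
  refine ⟨LinearMap.toMatrix' g, mulVecLin_inj ?_⟩
  rw [Matrix.mulVecLin_mul, Matrix.mulVecLin_mul, mulVecLin_toMatrix'', ← hf]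
  refine LinearMap.ext fun v => ?_
  have h1 : proj (f v) = ⟨f v, LinearMap.mem_range_self f v⟩ :=
    Submodule.linearProjOfIsCompl_apply_left hq ⟨f v, LinearMap.mem_range_self f v⟩
  have h2 : ∀ y : LinearMap.range f, f (s y) = y := by
    intro y
    have := congrFun (congrArg (fun h => h.toFun) hs) y
    simpa [LinearMap.rangeRestrict] using congrArg Subtype.val this
  simp [hg, h1, h2]

private theorem colSpace_eq_range {m n : ℕ} (M : Matrix (Fin m) (Fin n) ℝ) :
    colSpace M = LinearMap.range M.mulVecLin :=
  (Matrix.range_mulVecLin M).symm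

private theorem colSpace_mul_le {a b c : ℕ} (M : Matrix (Fin a) (Fin b) ℝ)
    (N : Matrix (Fin b) (Fin c) ℝ) : colSpace (M * N) ≤ colSpace M := by
  rw [colSpace_eq_range, colSpace_eq_range, Matrix.mulVecLin_mul]
  exact LinearMap.range_comp_le_range _ _

private theorem rowSpace_eq_colSpace {m n : Type*} (M : Matrix m n ℝ) :
    rowSpace M = colSpace Mᵀ := by
  simp [rowSpace, colSpace, Matrix.transpose_transpose]

private theorem rowSpace_mul_le {a b c : ℕ} (M : Matrix (Fin a) (Fin b) ℝ)
    (N : Matrix (Fin b) (Fin c) ℝ) : rowSpace (M * N) ≤ rowSpace N := by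
  rw [rowSpace_eq_colSpace, rowSpace_eq_colSpace, Matrix.transpose_mul]
  exact colSpace_mul_le _ _

private theorem col_recover {a b c : ℕ} {M : Matrix (Fin a) (Fin b) ℝ}
    {G : Matrix (Fin b) (Fin a) ℝ} {Y : Matrix (Fin a) (Fin c) ℝ}
    (hG : M * G * M = M) (hY : colSpace Y ≤ colSpace M) : M * G * Y = Y := by
  ext i j
  have hcol : Yᵀ j ∈ colSpace M := hY (Submodule.subset_span ⟨j, rfl⟩)
  rw [colSpace_eq_range, LinearMap.mem_range] at hcol
  obtain ⟨cv, hcv⟩ := hcol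
  have hcv' : M.mulVec cv = Yᵀ j := hcv
  have e1 : (M * G * Y) i j = ((M * G).mulVec (Yᵀ j)) i := by
    simp [Matrix.mul_apply, Matrix.mulVec, dotProduct]
  rw [e1, ← hcv', Matrix.mulVec_mulVec, hG, hcv']
  rfl

private theorem row_recover {a b c : ℕ} {Q : Matrix (Fin b) (Fin c) ℝ}
    {G : Matrix (Fin c) (Fin b) ℝ} {Y : Matrix (Fin a) (Fin c) ℝ}
    (hG : Q * G * Q = Q) (hY : rowSpace Y ≤ rowSpace Q) : Y * G * Q = Y := by
  have hG' : Qᵀ * Gᵀ * Qᵀ = Qᵀ := by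
    rw [← Matrix.transpose_mul, ← Matrix.transpose_mul, ← Matrix.mul_assoc, hG]
  have hY' : colSpace Yᵀ ≤ colSpace Qᵀ := by
    rw [← rowSpace_eq_colSpace, ← rowSpace_eq_colSpace]; exact hY
  have := col_recover hG' hY'
  have := congrArg Matrix.transpose this
  simpa [Matrix.transpose_mul, Matrix.mul_assoc] using this

theorem stmt0 {n d mS mR : ℕ} (A : Matrix (Fin n) (Fin d) ℝ)
    (S : Matrix (Fin mS) (Fin n) ℝ) (R : Matrix (Fin mR) (Fin d) ℝ)
    (k : ℕ) (hk : 0 < k) :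
    ({Y | ∃ X : Matrix (Fin mR) (Fin mS) ℝ, X.rank ≤ k ∧ Y = A * Rᵀ * X * S * A}
      = {Y : Matrix (Fin n) (Fin d) ℝ |
          Y.rank ≤ k ∧ rowSpace Y ≤ rowSpace (S * A) ∧ colSpace Y ≤ colSpace (A * Rᵀ)})
    ∧ (⨅ X : {X : Matrix (Fin mR) (Fin mS) ℝ // X.rank ≤ k},
          frobSq (A * Rᵀ * X.1 * S * A - A))
      = (⨅ Y : {Y : Matrix (Fin n) (Fin d) ℝ //
            Y.rank ≤ k ∧ rowSpace Y ≤ rowSpace (S * A) ∧ colSpace Y ≤ colSpace (A * Rᵀ)},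
          frobSq (Y.1 - A)) := by
  have hset : ({Y | ∃ X : Matrix (Fin mR) (Fin mS) ℝ, X.rank ≤ k ∧ Y = A * Rᵀ * X * S * A}
      = {Y : Matrix (Fin n) (Fin d) ℝ |
          Y.rank ≤ k ∧ rowSpace Y ≤ rowSpace (S * A) ∧ colSpace Y ≤ colSpace (A * Rᵀ)}) := by
    ext Y
    constructor
    · rintro ⟨X, hX, rfl⟩
      refine ⟨?_, ?_, ?_⟩
      · calc (A * Rᵀ * X * S * A).rank ≤ (A * Rᵀ * X * S).rank := Matrix.rank_mul_le_left _ _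
          _ ≤ (A * Rᵀ * X).rank := Matrix.rank_mul_le_left _ _
          _ ≤ X.rank := Matrix.rank_mul_le_right _ _
          _ ≤ k := hX
      · have : A * Rᵀ * X * S * A = (A * Rᵀ * X) * (S * A) := by
          simp only [Matrix.mul_assoc]
        rw [this]
        exact rowSpace_mul_le _ _
      · have : A * Rᵀ * X * S * A = (A * Rᵀ) * (X * S * A) := by
          simp only [Matrix.mul_assoc]
        rw [this]
        exact colSpace_mul_le _ _
    · rintro ⟨hr, hrow, hcol⟩
      obtain ⟨GP, hGP⟩ := exists_ginv (A * Rᵀ)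
      obtain ⟨GQ, hGQ⟩ := exists_ginv (S * A)
      refine ⟨GP * Y * GQ, ?_, ?_⟩
      · calc (GP * Y * GQ).rank ≤ (GP * Y).rank := Matrix.rank_mul_le_left _ _
          _ ≤ Y.rank := Matrix.rank_mul_le_right _ _
          _ ≤ k := hr
      · have h1 : (A * Rᵀ) * GP * Y = Y := col_recover hGP hcol
        have h2 : Y * GQ * (S * A) = Y := row_recover hGQ hrow
        calc Y = Y * GQ * (S * A) := h2.symm
          _ = ((A * Rᵀ) * GP * Y) * GQ * (S * A) := by rw [h1]
          _ = A * Rᵀ * (GP * Y * GQ) * S * A := by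
              simp only [Matrix.mul_assoc]
  refine ⟨hset, ?_⟩
  rw [iInf, iInf]
  congr 1
  ext r
  simp only [Set.mem_range, Subtype.exists]
  constructor
  · rintro ⟨X, hX, rfl⟩
    have hmem : A * Rᵀ * X * S * A ∈ {Y : Matrix (Fin n) (Fin d) ℝ |
        Y.rank ≤ k ∧ rowSpace Y ≤ rowSpace (S * A) ∧ colSpace Y ≤ colSpace (A * Rᵀ)} := by
      rw [← hset]; exact ⟨X, hX, rfl⟩
    exact ⟨A * Rᵀ * X * S * A, hmem, rfl⟩
  · rintro ⟨Y, hY, rfl⟩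
    have hmem : Y ∈ {Y | ∃ X : Matrix (Fin mR) (Fin mS) ℝ, X.rank ≤ k ∧ Y = A * Rᵀ * X * S * A} := by
      rw [hset]; exact hY
    obtain ⟨X, hX, hYX⟩ := hmem
    exact ⟨X, hX, by rw [← hYX]⟩
end

section
/- (Sketch monotonicity for low-rank approximation.) Let A ∈ ℝ^{n×d}, let S₁ ∈ ℝ^{m_S×n} and R₁ ∈ ℝ^{m_R×d} be arbitrary matrices, and let S̄, R̄ be extensions of S₁, R₁. Let η ≥ 0 and let X̂ be a matrix of rank at most k satisfying ‖A R̄ᵀ X̂ S̄ A − A‖_F² ≤ (1+η) · min over rank-≤k X of ‖A R̄ᵀ X S̄ A − A‖_F² (as is guaranteed for the output of the sketched low-rank approximation algorithm run with affine η-embeddings). Then for every matrix X̂₁ of rank at most k, ‖A − A R̄ᵀ X̂ S̄ A‖_F² ≤ (1+η)² ‖A − A R₁ᵀ X̂₁ S₁ A‖_F². -/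
open Matrix

lemma frobSq_nonneg {m n : Type*} [Fintype m] [Fintype n] (M : Matrix m n ℝ) :
    0 ≤ frobSq M := by
  apply Finset.sum_nonneg; intro i _; apply Finset.sum_nonneg; intro j _; positivity

lemma frobSq_sub_comm {m n : Type*} [Fintype m] [Fintype n] (M N : Matrix m n ℝ) :
    frobSq (M - N) = frobSq (N - M) := by
  unfold frobSq
  congr 1; ext i; congr 1; ext j
  simp [Matrix.sub_apply]
  ring

theorem stmt2 {n d mS mR pS pR : ℕ} (k : ℕ) (hk : 0 < k)
    (η : ℝ) (hη : 0 ≤ η)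
    (A : Matrix (Fin n) (Fin d) ℝ)
    (S1 : Matrix (Fin mS) (Fin n) ℝ) (R1 : Matrix (Fin mR) (Fin d) ℝ)
    (S2 : Matrix (Fin pS) (Fin n) ℝ) (R2 : Matrix (Fin pR) (Fin d) ℝ)
    (Xhat : Matrix (Fin mR ⊕ Fin pR) (Fin mS ⊕ Fin pS) ℝ) (hXhat : Xhat.rank ≤ k)
    (hopt : frobSq (A * (Matrix.fromRows R1 R2)ᵀ * Xhat * Matrix.fromRows S1 S2 * A - A)
      ≤ (1 + η) * ⨅ X : {X : Matrix (Fin mR ⊕ Fin pR) (Fin mS ⊕ Fin pS) ℝ // X.rank ≤ k},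
          frobSq (A * (Matrix.fromRows R1 R2)ᵀ * X.1 * Matrix.fromRows S1 S2 * A - A)) :
    ∀ X1 : Matrix (Fin mR) (Fin mS) ℝ, X1.rank ≤ k →
      frobSq (A - A * (Matrix.fromRows R1 R2)ᵀ * Xhat * Matrix.fromRows S1 S2 * A)
        ≤ (1 + η) ^ 2 * frobSq (A - A * R1ᵀ * X1 * S1 * A) := by
  intro X1 hX1
  set ER : Matrix (Fin mR ⊕ Fin pR) (Fin mR) ℝ := Matrix.fromRows 1 0 with hER
  set ES : Matrix (Fin mS) (Fin mS ⊕ Fin pS) ℝ := Matrix.fromCols 1 0 with hES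
  set X' : Matrix (Fin mR ⊕ Fin pR) (Fin mS ⊕ Fin pS) ℝ := ER * X1 * ES with hX'
  have hrank : X'.rank ≤ k := by
    calc X'.rank ≤ (ER * X1).rank := Matrix.rank_mul_le_left _ _
    _ ≤ X1.rank := Matrix.rank_mul_le_right _ _
    _ ≤ k := hX1
  have hcalc : A * (Matrix.fromRows R1 R2)ᵀ * X' * Matrix.fromRows S1 S2
      = A * R1ᵀ * X1 * S1 := by
    have h1 : (Matrix.fromRows R1 R2)ᵀ * ER = R1ᵀ := by
      rw [Matrix.transpose_fromRows, hER, Matrix.fromCols_mul_fromRows]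
      simp
    have h2 : ES * Matrix.fromRows S1 S2 = S1 := by
      rw [hES, Matrix.fromCols_mul_fromRows]
      simp
    calc A * (Matrix.fromRows R1 R2)ᵀ * X' * Matrix.fromRows S1 S2
        = A * ((Matrix.fromRows R1 R2)ᵀ * ER) * X1 * (ES * Matrix.fromRows S1 S2) := by
          rw [hX']; simp only [Matrix.mul_assoc]
      _ = A * R1ᵀ * X1 * S1 := by rw [h1, h2]
  have hbdd : BddBelow (Set.range fun X :
      {X : Matrix (Fin mR ⊕ Fin pR) (Fin mS ⊕ Fin pS) ℝ // X.rank ≤ k} =>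
      frobSq (A * (Matrix.fromRows R1 R2)ᵀ * X.1 * Matrix.fromRows S1 S2 * A - A)) := by
    refine ⟨0, ?_⟩
    rintro x ⟨X, rfl⟩
    exact frobSq_nonneg _
  have hle : (⨅ X : {X : Matrix (Fin mR ⊕ Fin pR) (Fin mS ⊕ Fin pS) ℝ // X.rank ≤ k},
      frobSq (A * (Matrix.fromRows R1 R2)ᵀ * X.1 * Matrix.fromRows S1 S2 * A - A))
      ≤ frobSq (A * R1ᵀ * X1 * S1 * A - A) := by
    have := ciInf_le hbdd (⟨X', hrank⟩ :
      {X : Matrix (Fin mR ⊕ Fin pR) (Fin mS ⊕ Fin pS) ℝ // X.rank ≤ k})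
    rwa [hcalc] at this
  rw [frobSq_sub_comm, frobSq_sub_comm A]
  calc frobSq (A * (Matrix.fromRows R1 R2)ᵀ * Xhat * Matrix.fromRows S1 S2 * A - A)
      ≤ (1 + η) * _ := hopt
    _ ≤ (1 + η) * frobSq (A * R1ᵀ * X1 * S1 * A - A) := by
        apply mul_le_mul_of_nonneg_left hle (by linarith)
    _ ≤ (1 + η) ^ 2 * frobSq (A * R1ᵀ * X1 * S1 * A - A) := by
        have := frobSq_nonneg (A * R1ᵀ * X1 * S1 * A - A)
        nlinarith [mul_nonneg (mul_nonneg hη (by linarith : (0:ℝ) ≤ 1 + η)) this]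
end

section
/- Let A ∈ ℝ^{n×d}, let k be a positive integer with k ≤ min(n,d), let A_k denote the best rank-k approximation of A, and let 0 ≤ ε < 1. If S ∈ ℝ^{m×n} is an affine ε-embedding for the pair (A_k, A), then min over matrices X ∈ ℝ^{n×m} of rank at most k of ‖X S A − A‖_F² ≤ ((1+ε)/(1−ε)) · ‖A_k − A‖_F². In particular, the row space of SA contains a rank-≤k approximation of A with error at most ((1+ε)/(1−ε))‖A_k − A‖_F². -/
open Matrix

lemma norm_sq_eucl {m : ℕ} (x : EuclideanSpace ℝ (Fin m)) : ‖x‖^2 = ∑ i, (x i)^2 := by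
  rw [EuclideanSpace.norm_eq, Real.sq_sqrt (Finset.sum_nonneg fun _ _ => sq_nonneg _)]
  simp [Real.norm_eq_abs, sq_abs]

lemma frobSq_eq_sum_cols {p q : ℕ} (M : Matrix (Fin p) (Fin q) ℝ) :
    frobSq M = ∑ j, ‖(WithLp.linearEquiv 2 ℝ (Fin p → ℝ)).symm (fun i => M i j)‖^2 := by
  rw [frobSq, Finset.sum_comm]
  refine Finset.sum_congr rfl fun j _ => ?_
  rw [norm_sq_eucl]; rfl

lemma col_mul {p q r : ℕ} (M : Matrix (Fin p) (Fin q) ℝ) (N : Matrix (Fin q) (Fin r) ℝ)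
    (j : Fin r) : (fun i => (M * N) i j) = M.mulVec (fun l => N l j) := by
  ext i; simp [Matrix.mul_apply, Matrix.mulVec, dotProduct]

lemma key_sketch {n d m : ℕ} (A Ak : Matrix (Fin n) (Fin d) ℝ) (S : Matrix (Fin m) (Fin n) ℝ) :
    ∃ M0 : Matrix (Fin d) (Fin m) ℝ,
      frobSq (S * (Ak * (M0 * (S * A)) - A)) ≤
        frobSq (S * (Ak * (1 : Matrix (Fin d) (Fin d) ℝ) - A)) := by
  classical
  set e := WithLp.linearEquiv 2 ℝ (Fin m → ℝ) with he
  set g : (Fin d → ℝ) →ₗ[ℝ] EuclideanSpace ℝ (Fin m) :=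
    e.symm.toLinearMap ∘ₗ (S * Ak).mulVecLin with hg
  set K := LinearMap.range g with hK
  obtain ⟨L, hL⟩ := g.rangeRestrict.exists_rightInverse_of_surjective
    (LinearMap.range_eq_top.2 g.surjective_rangeRestrict)
  have hgL : ∀ x : K, g (L x) = ↑x := by
    intro x
    have h1 : g.rangeRestrict (L x) = x := LinearMap.congr_fun hL x
    calc g (L x) = ↑(g.rangeRestrict (L x)) := rfl
      _ = ↑x := by rw [h1]
  set T : (Fin m → ℝ) →ₗ[ℝ] (Fin d → ℝ) :=
    L ∘ₗ (Submodule.orthogonalProjectionOnto K).toLinearMap ∘ₗ e.symm.toLinearMap with hT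
  refine ⟨LinearMap.toMatrix' T, ?_⟩
  set M0 := LinearMap.toMatrix' T with hM0def
  have hmv : ∀ v : Fin m → ℝ, M0.mulVec v = T v := by
    intro v
    rw [← Matrix.toLin'_apply, hM0def, Matrix.toLin'_toMatrix']
  have hCmv : ∀ x : Fin d → ℝ, (S * Ak).mulVec x = e (g x) := by
    intro x
    rw [hg]
    simp only [LinearMap.comp_apply, LinearEquiv.coe_coe, LinearEquiv.apply_symm_apply, Matrix.mulVecLin_apply]
  set B := S * A with hB
  rw [frobSq_eq_sum_cols, frobSq_eq_sum_cols, ← he]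
  refine Finset.sum_le_sum fun j _ => ?_
  set u : EuclideanSpace ℝ (Fin m) := e.symm (fun i => B i j) with hu
  have h4 : (fun i => B i j) = e u := by rw [hu, LinearEquiv.apply_symm_apply]
  -- left column
  have h2 : (fun i => ((S * Ak) * (M0 * B)) i j) = e ↑(Submodule.orthogonalProjectionOnto K u) := by
    rw [col_mul]
    have : (fun l => (M0 * B) l j) = M0.mulVec (fun l => B l j) := col_mul _ _ _
    rw [this, hmv, hCmv]
    congr 1
    have hTv : T (fun l => B l j) = L (Submodule.orthogonalProjectionOnto K u) := rfl
    rw [hTv, hgL]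
  have hleft : (fun i => (S * (Ak * (M0 * B) - A)) i j)
      = e (↑(Submodule.orthogonalProjectionOnto K u) - u) := by
    have h1 : S * (Ak * (M0 * B) - A) = (S * Ak) * (M0 * B) - B := by
      rw [Matrix.mul_sub, ← Matrix.mul_assoc, hB]
    funext i
    have h5 : (S * (Ak * (M0 * B) - A)) i j
        = (fun i => ((S * Ak) * (M0 * B)) i j) i - (fun i => B i j) i := by
      rw [h1]; rfl
    rw [h5, h2, h4]
    simp
  -- right column
  set v : EuclideanSpace ℝ (Fin m) := g (Pi.single j 1) with hv
  have h6 : (fun i => (S * Ak) i j) = e v := by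
    have : (fun i => (S * Ak) i j) = (S * Ak).mulVec (Pi.single j 1) := by
      ext i; simp [Matrix.mulVec, dotProduct, Pi.single_apply]
    rw [this, hCmv, hv]
  have hright : (fun i => (S * (Ak * (1 : Matrix (Fin d) (Fin d) ℝ) - A)) i j)
      = e (v - u) := by
    have h1 : S * (Ak * (1 : Matrix (Fin d) (Fin d) ℝ) - A) = (S * Ak) - B := by
      rw [Matrix.mul_one, Matrix.mul_sub, hB]
    funext i
    have h5 : (S * (Ak * (1 : Matrix (Fin d) (Fin d) ℝ) - A)) i j
        = (fun i => (S * Ak) i j) i - (fun i => B i j) i := by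
      rw [h1]; rfl
    rw [h5, h6, h4]
    simp
  rw [hleft, hright, LinearEquiv.symm_apply_apply, LinearEquiv.symm_apply_apply]
  have hmin : ‖↑(Submodule.orthogonalProjectionOnto K u) - u‖ ≤ ‖v - u‖ := by
    rw [norm_sub_rev, norm_sub_rev v u, ← Submodule.starProjection_apply, Submodule.starProjection_minimal]
    exact ciInf_le ⟨0, by rintro r ⟨w, rfl⟩; exact norm_nonneg _⟩
      (⟨v, LinearMap.mem_range_self g _⟩ : K)
  exact pow_le_pow_left₀ (norm_nonneg _) hmin 2

theorem stmt3 {n d m : ℕ} (k : ℕ) (hk : 0 < k) (hkn : k ≤ min n d)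
    (A Ak : Matrix (Fin n) (Fin d) ℝ)
    (hAkrank : Ak.rank ≤ k)
    (hAkbest : ∀ X : Matrix (Fin n) (Fin d) ℝ, X.rank ≤ k → frobSq (A - Ak) ≤ frobSq (A - X))
    (ε : ℝ) (hε0 : 0 ≤ ε) (hε1 : ε < 1)
    (S : Matrix (Fin m) (Fin n) ℝ)
    (hS : ∀ X : Matrix (Fin d) (Fin d) ℝ,
      (1 - ε) * frobSq (Ak * X - A) ≤ frobSq (S * (Ak * X - A)) ∧
        frobSq (S * (Ak * X - A)) ≤ (1 + ε) * frobSq (Ak * X - A)) :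
    (⨅ X : {X : Matrix (Fin n) (Fin m) ℝ // X.rank ≤ k},
        frobSq (X.1 * (S * A) - A)) ≤ ((1 + ε) / (1 - ε)) * frobSq (Ak - A)
    ∧ ∃ Y : Matrix (Fin n) (Fin d) ℝ, Y.rank ≤ k ∧ rowSpace Y ≤ rowSpace (S * A) ∧
        frobSq (Y - A) ≤ ((1 + ε) / (1 - ε)) * frobSq (Ak - A) := by
  obtain ⟨M0, hkey⟩ := key_sketch A Ak S
  have hε : (0:ℝ) < 1 - ε := by linarith
  set X' := Ak * M0 with hX'
  set Y := X' * (S * A) with hYdef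
  have hY : Y = Ak * (M0 * (S * A)) := by rw [hYdef, hX', Matrix.mul_assoc]
  have hrankX' : X'.rank ≤ k := le_trans (Matrix.rank_mul_le_left Ak M0) hAkrank
  have hrankY : Y.rank ≤ k := le_trans (Matrix.rank_mul_le_left X' _) hrankX'
  have hbound : frobSq (Y - A) ≤ ((1 + ε) / (1 - ε)) * frobSq (Ak - A) := by
    have h1 := (hS (M0 * (S * A))).1
    have h2 := (hS 1).2
    rw [Matrix.mul_one] at hkey h2
    have hchain : (1 - ε) * frobSq (Y - A) ≤ (1 + ε) * frobSq (Ak - A) := by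
      rw [hY]
      exact le_trans h1 (le_trans hkey h2)
    rw [div_mul_eq_mul_div, le_div_iff₀ hε]
    linarith
  constructor
  · refine ciInf_le_of_le ⟨0, ?_⟩ (⟨X', hrankX'⟩ : {X : Matrix (Fin n) (Fin m) ℝ // X.rank ≤ k}) ?_
    · rintro r ⟨w, rfl⟩; exact frobSq_nonneg _
    · exact hbound
  · refine ⟨Y, hrankY, ?_, hbound⟩
    rw [rowSpace, rowSpace, Submodule.span_le]
    rintro _ ⟨i, rfl⟩
    have hYi : Y i = ∑ l, X' i l • (S * A) l := by
      ext j; simp [hYdef, Matrix.mul_apply, Finset.sum_apply]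
    show Y i ∈ _
    rw [hYi]
    exact Submodule.sum_mem _ fun l _ =>
      Submodule.smul_mem _ _ (Submodule.subset_span ⟨l, rfl⟩)
end

section
/- Let A ∈ ℝ^{n×d}, let k ≤ min(n,d) be a positive integer, let A_k denote the best rank-k approximation of A, and let 0 ≤ ε < 1. Suppose S ∈ ℝ^{m_S×n} is an affine ε-embedding for the pair (A_k, A), and R ∈ ℝ^{m_R×d} is an affine ε-embedding for the pair ((SA)ᵀ, Aᵀ). Then min over matrices X ∈ ℝ^{m_R×m_S} of rank at most k of ‖A Rᵀ X S A − A‖_F² ≤ ((1+ε)/(1−ε))² · ‖A_k − A‖_F². -/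
open Matrix

lemma exists_proj {a b : ℕ} (C : Matrix (Fin a) (Fin b) ℝ) :
    ∃ P : Matrix (Fin a) (Fin a) ℝ, Pᵀ = P ∧ P * P = P ∧ P * C = C ∧
      ∃ Z : Matrix (Fin b) (Fin a) ℝ, P = C * Z := by
  set V : Submodule ℝ (EuclideanSpace ℝ (Fin a)) :=
    (LinearMap.range (Matrix.toLin' C : (Fin b → ℝ) →ₗ[ℝ] (Fin a → ℝ))).comap
      (WithLp.linearEquiv 2 ℝ (Fin a → ℝ)).toLinearMap with hV
  let g : EuclideanSpace ℝ (Fin a) →ₗ[ℝ] EuclideanSpace ℝ (Fin a) :=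
    (V.starProjection).toLinearMap
  let f : (Fin a → ℝ) →ₗ[ℝ] (Fin a → ℝ) :=
    (WithLp.linearEquiv 2 ℝ (Fin a → ℝ)).toLinearMap ∘ₗ g ∘ₗ
      (WithLp.linearEquiv 2 ℝ (Fin a → ℝ)).symm.toLinearMap
  have hf_app : ∀ x, f x = (g (WithLp.toLp 2 x)).ofLp := fun x => rfl
  have hf_mem : ∀ x, f x ∈ LinearMap.range (Matrix.toLin' C) := fun x =>
    V.starProjection_apply_mem (WithLp.toLp 2 x)
  have hf_fix : ∀ x ∈ LinearMap.range (Matrix.toLin' C), f x = x := by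
    intro x hx
    rw [hf_app]
    have : WithLp.toLp 2 x ∈ V := hx
    show (V.starProjection (WithLp.toLp 2 x)).ofLp = x
    rw [Submodule.starProjection_eq_self_iff.2 this]
  have h1 : ∀ (u : EuclideanSpace ℝ (Fin a)) (i : Fin a),
      inner (𝕜 := ℝ) u (EuclideanSpace.single i (1:ℝ)) = u i := by
    intro u i
    rw [EuclideanSpace.inner_single_right]
    simp
  have hsa : ∀ u v : EuclideanSpace ℝ (Fin a),
      inner (𝕜 := ℝ) (g u) v = inner (𝕜 := ℝ) u (g v) := by
    intro u v
    exact Submodule.inner_starProjection_left_eq_right V u v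
  have hsingle : ∀ (j : Fin a), WithLp.toLp 2 (Pi.single j (1:ℝ)) =
      (EuclideanSpace.single j (1:ℝ) : EuclideanSpace ℝ (Fin a)) := by
    intro j
    rfl
  refine ⟨LinearMap.toMatrix' f, ?_, ?_, ?_, ?_⟩
  · ext i j
    rw [Matrix.transpose_apply, LinearMap.toMatrix'_apply, LinearMap.toMatrix'_apply,
      hf_app, hf_app, hsingle, hsingle]
    calc g (EuclideanSpace.single i 1) j
        = inner (𝕜 := ℝ) (g (EuclideanSpace.single i 1)) (EuclideanSpace.single j 1) := (h1 _ _).symm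
      _ = inner (𝕜 := ℝ) (EuclideanSpace.single i 1) (g (EuclideanSpace.single j 1)) := hsa _ _
      _ = inner (𝕜 := ℝ) (g (EuclideanSpace.single j 1)) (EuclideanSpace.single i 1) := real_inner_comm _ _
      _ = g (EuclideanSpace.single j 1) i := h1 _ _
  · rw [← LinearMap.toMatrix'_comp]
    congr 1
    refine LinearMap.ext fun x => ?_
    exact hf_fix _ (hf_mem x)
  · rw [show C = LinearMap.toMatrix' (Matrix.toLin' C) from (LinearMap.toMatrix'_toLin' C).symm,
      ← LinearMap.toMatrix'_comp]
    congr 1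
    refine LinearMap.ext fun x => ?_
    exact hf_fix _ ⟨x, rfl⟩
  · have hmem : ∀ j : Fin a, ∃ z : Fin b → ℝ, Matrix.toLin' C z
        = f (Pi.single j (1:ℝ)) := fun j =>
      hf_mem (Pi.single j (1:ℝ))
    choose z hz using hmem
    refine ⟨Matrix.of (fun i j => z j i), ?_⟩
    ext i j
    rw [LinearMap.toMatrix'_apply, ← hz j]
    simp [Matrix.mul_apply, Matrix.toLin'_apply, Matrix.mulVec, dotProduct]

lemma frobSq_transpose {m n : Type*} [Fintype m] [Fintype n] (M : Matrix m n ℝ) :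
    frobSq Mᵀ = frobSq M := by
  simp only [frobSq, Matrix.transpose_apply]
  exact Finset.sum_comm

lemma frobSq_eq_trace {m n : Type*} [Fintype m] [Fintype n] (M : Matrix m n ℝ) :
    frobSq M = (Mᵀ * M).trace := by
  simp only [frobSq, Matrix.trace, Matrix.diag, Matrix.mul_apply, Matrix.transpose_apply, sq]
  exact Finset.sum_comm

lemma frob_pyth {p q : Type*} [Fintype p] [Fintype q] (P : Matrix p p ℝ) (D : Matrix p q ℝ)
    (hsym : Pᵀ = P) (hidem : P * P = P) :
    frobSq (P * D) + frobSq (D - P * D) = frobSq D := by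
  have hPP : Pᵀ * P = P := by rw [hsym, hidem]
  have e1 : (P * D)ᵀ * (P * D) = Dᵀ * (P * D) := by
    rw [Matrix.transpose_mul, Matrix.mul_assoc, ← Matrix.mul_assoc Pᵀ, hPP]
  have e2 : (D - P * D)ᵀ * (D - P * D) = Dᵀ * D - Dᵀ * (P * D) := by
    rw [Matrix.transpose_sub, Matrix.sub_mul, Matrix.mul_sub, Matrix.mul_sub, e1,
      Matrix.transpose_mul, Matrix.mul_assoc, hsym]
    abel
  rw [frobSq_eq_trace, frobSq_eq_trace, frobSq_eq_trace, e1, e2, Matrix.trace_sub]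
  ring

lemma frob_resid_le {p q : Type*} [Fintype p] [Fintype q] (P : Matrix p p ℝ) (D : Matrix p q ℝ)
    (hsym : Pᵀ = P) (hidem : P * P = P) :
    frobSq (D - P * D) ≤ frobSq D := by
  have h := frob_pyth P D hsym hidem
  have := frobSq_nonneg (P * D)
  linarith

lemma frob_right_le {p q : Type*} [Fintype p] [Fintype q] (P : Matrix q q ℝ) (E : Matrix p q ℝ)
    (hsym : Pᵀ = P) (hidem : P * P = P) :
    frobSq (E * P) ≤ frobSq E := by
  have h := frob_pyth P Eᵀ hsym hidem
  have h2 := frobSq_nonneg (Eᵀ - P * Eᵀ)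
  have h3 : frobSq (P * Eᵀ) = frobSq (E * P) := by
    rw [← frobSq_transpose (E * P), Matrix.transpose_mul, hsym]
  rw [frobSq_transpose] at h
  linarith

lemma arith_aux (ε c Δ g : ℝ) (hε' : 0 < 1 - ε) (hε0 : 0 ≤ ε) (hΔ : 0 ≤ Δ)
    (t1 : (1 - ε) * c ≤ (1 + ε) * Δ) (t4 : (1 - ε) * g ≤ (1 + ε) * c) :
    g ≤ ((1 + ε) / (1 - ε)) ^ 2 * Δ := by
  rw [div_pow, div_mul_eq_mul_div, le_div_iff₀ (by positivity)]
  nlinarith [mul_le_mul_of_nonneg_left t4 (le_of_lt hε'),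
    mul_le_mul_of_nonneg_left t1 (by linarith : (0:ℝ) ≤ 1 + ε)]


theorem stmt4 {n d mS mR : ℕ} (k : ℕ) (hk : 0 < k) (hkn : k ≤ min n d)
    (A Ak : Matrix (Fin n) (Fin d) ℝ)
    (hAkrank : Ak.rank ≤ k)
    (hAkbest : ∀ X : Matrix (Fin n) (Fin d) ℝ, X.rank ≤ k → frobSq (A - Ak) ≤ frobSq (A - X))
    (ε : ℝ) (hε0 : 0 ≤ ε) (hε1 : ε < 1)
    (S : Matrix (Fin mS) (Fin n) ℝ) (R : Matrix (Fin mR) (Fin d) ℝ)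
    (hS : ∀ X : Matrix (Fin d) (Fin d) ℝ,
      (1 - ε) * frobSq (Ak * X - A) ≤ frobSq (S * (Ak * X - A)) ∧
        frobSq (S * (Ak * X - A)) ≤ (1 + ε) * frobSq (Ak * X - A))
    (hR : ∀ X : Matrix (Fin mS) (Fin n) ℝ,
      (1 - ε) * frobSq ((S * A)ᵀ * X - Aᵀ) ≤ frobSq (R * ((S * A)ᵀ * X - Aᵀ)) ∧
        frobSq (R * ((S * A)ᵀ * X - Aᵀ)) ≤ (1 + ε) * frobSq ((S * A)ᵀ * X - Aᵀ)) :
    (⨅ X : {X : Matrix (Fin mR) (Fin mS) ℝ // X.rank ≤ k},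
        frobSq (A * Rᵀ * X.1 * S * A - A)) ≤ ((1 + ε) / (1 - ε)) ^ 2 * frobSq (Ak - A) := by
  have hε' : (0:ℝ) < 1 - ε := by linarith
  obtain ⟨P₁, hP1sym, hP1idem, hP1C, Z₁, hP1Z⟩ := exists_proj (S * Ak)
  obtain ⟨P₂, hP2sym, hP2idem, hP2C, Z₃, hP2Z⟩ := exists_proj (A * Rᵀ)
  obtain ⟨Q, hQsym, hQidem, hQC, Z₂, hQZ⟩ := exists_proj (R * (S * A)ᵀ)
  set Δ := frobSq (Ak - A) with hΔ
  -- Step 1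
  set X₁ : Matrix (Fin d) (Fin d) ℝ := Z₁ * (S * A) with hX₁
  set c := frobSq (Ak * X₁ - A) with hc
  have hSAkX : S * (Ak * X₁) = P₁ * (S * A) := by
    rw [hP1Z, hX₁]
    simp only [Matrix.mul_assoc]
  have hresid : (S * Ak - S * A) - P₁ * (S * Ak - S * A) = P₁ * (S * A) - S * A := by
    rw [Matrix.mul_sub, hP1C]
    abel
  have hls : frobSq (P₁ * (S * A) - S * A) ≤ frobSq (S * Ak - S * A) := by
    rw [← hresid]
    exact frob_resid_le _ _ hP1sym hP1idem
  have t1 : (1 - ε) * c ≤ (1 + ε) * Δ := by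
    have h1 := (hS X₁).1
    have h2 := (hS 1).2
    rw [Matrix.mul_one] at h2
    have h3 : frobSq (S * (Ak * X₁ - A)) = frobSq (P₁ * (S * A) - S * A) := by
      rw [Matrix.mul_sub, hSAkX]
    have h4 : frobSq (S * (Ak - A)) = frobSq (S * Ak - S * A) := by rw [Matrix.mul_sub]
    rw [h3] at h1
    rw [h4] at h2
    calc (1 - ε) * c ≤ frobSq (P₁ * (S * A) - S * A) := h1
      _ ≤ frobSq (S * Ak - S * A) := hls
      _ ≤ (1 + ε) * Δ := h2
  -- Step 2
  set W : Matrix (Fin n) (Fin mS) ℝ := Ak * Z₁ with hW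
  set M : Matrix (Fin mR) (Fin n) ℝ := R * (S * A)ᵀ * Wᵀ with hM
  have hWt : (S * A)ᵀ * Wᵀ - Aᵀ = (Ak * X₁ - A)ᵀ := by
    rw [Matrix.transpose_sub, ← Matrix.transpose_mul, hW, hX₁]
    simp only [Matrix.mul_assoc]
  have t2 : frobSq (M - R * Aᵀ) ≤ (1 + ε) * c := by
    have h1 := (hR Wᵀ).2
    have h2 : R * ((S * A)ᵀ * Wᵀ - Aᵀ) = M - R * Aᵀ := by
      rw [Matrix.mul_sub, hM, Matrix.mul_assoc]
    rw [h2, hWt, frobSq_transpose] at h1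
    exact h1
  have hP2' : Z₃ᵀ * (R * Aᵀ) = P₂ := by
    have h := congrArg Matrix.transpose hP2Z
    rw [hP2sym, Matrix.transpose_mul, Matrix.transpose_mul, Matrix.transpose_transpose] at h
    exact h.symm
  have hRAP : R * Aᵀ * P₂ = R * Aᵀ := by
    have h := congrArg Matrix.transpose hP2C
    rwa [Matrix.transpose_mul, Matrix.transpose_mul, hP2sym, Matrix.transpose_transpose] at h
  have t3 : frobSq (M * P₂ - R * Aᵀ) ≤ (1 + ε) * c := by
    have h1 : (M - R * Aᵀ) * P₂ = M * P₂ - R * Aᵀ := by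
      rw [Matrix.sub_mul, hRAP]
    calc frobSq (M * P₂ - R * Aᵀ) = frobSq ((M - R * Aᵀ) * P₂) := by rw [h1]
      _ ≤ frobSq (M - R * Aᵀ) := frob_right_le _ _ hP2sym hP2idem
      _ ≤ (1 + ε) * c := t2
  set X : Matrix (Fin mR) (Fin mS) ℝ := (Z₂ * M * Z₃ᵀ)ᵀ with hX
  have hrank : X.rank ≤ k := by
    rw [hX, Matrix.rank_transpose]
    calc (Z₂ * M * Z₃ᵀ).rank ≤ (Z₂ * M).rank := Matrix.rank_mul_le_left _ _
      _ ≤ M.rank := Matrix.rank_mul_le_right _ _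
      _ ≤ Wᵀ.rank := by rw [hM]; exact Matrix.rank_mul_le_right _ _
      _ = W.rank := Matrix.rank_transpose _
      _ ≤ Ak.rank := by rw [hW]; exact Matrix.rank_mul_le_left _ _
      _ ≤ k := hAkrank
  have hQM : Q * M = M := by
    rw [hM, ← Matrix.mul_assoc, hQC]
  have hkey : R * ((S * A)ᵀ * (Xᵀ * (R * Aᵀ)) - Aᵀ) = M * P₂ - R * Aᵀ := by
    rw [Matrix.mul_sub]
    congr 1
    rw [hX, Matrix.transpose_transpose]
    calc R * ((S * A)ᵀ * (Z₂ * M * Z₃ᵀ * (R * Aᵀ)))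
        = (R * (S * A)ᵀ * Z₂) * (M * (Z₃ᵀ * (R * Aᵀ))) := by simp only [Matrix.mul_assoc]
      _ = Q * (M * P₂) := by rw [← hQZ, hP2']
      _ = M * P₂ := by rw [← Matrix.mul_assoc, hQM]
  set g := frobSq ((S * A)ᵀ * (Xᵀ * (R * Aᵀ)) - Aᵀ) with hg
  have t4 : (1 - ε) * g ≤ (1 + ε) * c := by
    have h1 := (hR (Xᵀ * (R * Aᵀ))).1
    rw [hkey] at h1
    exact h1.trans t3
  have hgoalT : (A * Rᵀ * X * S * A - A)ᵀ = (S * A)ᵀ * (Xᵀ * (R * Aᵀ)) - Aᵀ := by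
    simp only [Matrix.transpose_sub, Matrix.transpose_mul, Matrix.transpose_transpose,
      Matrix.mul_assoc]
  have hgoal : frobSq (A * Rᵀ * X * S * A - A) = g := by
    rw [hg, ← hgoalT, frobSq_transpose]
  have hfinal : g ≤ ((1 + ε) / (1 - ε)) ^ 2 * Δ :=
    arith_aux ε c Δ g hε' hε0 (hΔ ▸ frobSq_nonneg (Ak - A)) t1 t4
  refine ciInf_le_of_le ⟨0, ?_⟩ ⟨X, hrank⟩ ?_
  · rintro y ⟨x, rfl⟩
    exact frobSq_nonneg _
  · rw [hgoal]
    exact hfinal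
end

section
/- Let A ∈ ℝ^{n×d} with rows A_1,…,A_n, let η ∈ (0,1/3], and let S ∈ ℝ^{m×n} be such that, writing SA = UΣVᵀ with V having orthonormal columns spanning row(SA), one has ‖A − AVVᵀ‖₂² ≤ (η/k)·‖A − A_k‖_F². Let π denote orthogonal projection of ℝ^d onto row(SA). Let C = {C_1,…,C_k} be an optimal k-means clustering of the projected points π(A_1),…,π(A_n), let μ_{C_1},…,μ_{C_k} ∈ row(SA) be its corresponding optimal centers for the projected points, and let μ*_{C_1},…,μ*_{C_k} ∈ ℝ^d be the optimal centers in ℝ^d for the same partition C applied to the original rows. Then ∑_{i=1}^k ∑_{j∈C_i} ‖A_j − μ_{C_i}‖² ≤ (1+η) · ∑_{i=1}^k ∑_{j∈C_i} ‖A_j − μ*_{C_i}‖². -/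
open Matrix

/-- Squared Euclidean norm of a vector in `ℝ^d`. -/
noncomputable def sqNorm {d : ℕ} (x : Fin d → ℝ) : ℝ := ∑ l, (x l) ^ 2

/-- Euclidean dot product on `ℝ^d`. -/
noncomputable def dotp {d : ℕ} (x y : Fin d → ℝ) : ℝ := ∑ l, x l * y l

/-- The `k`-means cost of the points `P 0, …, P (n-1)` under the partition (cluster
assignment) `c`, where each cluster uses its optimal center. -/
noncomputable def kmeansCost {n d k : ℕ} (P : Fin n → Fin d → ℝ) (c : Fin n → Fin k) : ℝ :=
  ∑ i : Fin k, ⨅ μ : Fin d → ℝ,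
    ∑ j ∈ Finset.univ.filter (fun j => c j = i), sqNorm (P j - μ)

lemma sqNorm_nonneg {d : ℕ} (x : Fin d → ℝ) : 0 ≤ sqNorm x :=
  Finset.sum_nonneg fun _ _ => sq_nonneg _

lemma sqNorm_eq_zero {d : ℕ} {x : Fin d → ℝ} (h : sqNorm x = 0) : x = 0 := by
  funext l
  have := (Finset.sum_eq_zero_iff_of_nonneg (fun i _ => sq_nonneg (x i))).1 h l (Finset.mem_univ l)
  exact pow_eq_zero_iff (two_ne_zero) |>.1 this

lemma dotp_self {d : ℕ} (x : Fin d → ℝ) : dotp x x = sqNorm x := by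
  simp [dotp, sqNorm, sq]

lemma dotp_sub_left {d : ℕ} (a b c : Fin d → ℝ) : dotp (a - b) c = dotp a c - dotp b c := by
  simp [dotp, sub_mul, Finset.sum_sub_distrib]

lemma dotp_add_right {d : ℕ} (a b c : Fin d → ℝ) : dotp a (b + c) = dotp a b + dotp a c := by
  simp [dotp, mul_add, Finset.sum_add_distrib]

lemma dotp_smul_right {d : ℕ} (a : Fin d → ℝ) (t : ℝ) (b : Fin d → ℝ) :
    dotp a (t • b) = t * dotp a b := by
  simp only [dotp, Pi.smul_apply, smul_eq_mul, Finset.mul_sum]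
  exact Finset.sum_congr rfl fun l _ => by ring

lemma dotp_zero_right {d : ℕ} (a : Fin d → ℝ) : dotp a 0 = 0 := by simp [dotp]

lemma dotp_sum_left {d : ℕ} {α : Type*} (T : Finset α) (f : α → Fin d → ℝ) (c : Fin d → ℝ) :
    dotp (∑ j ∈ T, f j) c = ∑ j ∈ T, dotp (f j) c := by
  simp only [dotp, Finset.sum_apply, Finset.sum_mul]
  rw [Finset.sum_comm]

lemma sqNorm_add {d : ℕ} (a b : Fin d → ℝ) :
    sqNorm (a + b) = sqNorm a + 2 * dotp a b + sqNorm b := by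
  have h : ∀ l, (a l + b l)^2 = a l ^2 + 2*(a l * b l) + b l ^2 := fun l => by ring
  simp only [sqNorm, dotp, Pi.add_apply, h, Finset.sum_add_distrib, Finset.mul_sum]

lemma sqNorm_sub {d : ℕ} (a b : Fin d → ℝ) :
    sqNorm (a - b) = sqNorm a - 2 * dotp a b + sqNorm b := by
  have h : ∀ l, (a l - b l)^2 = a l ^2 - 2*(a l * b l) + b l ^2 := fun l => by ring
  simp only [sqNorm, dotp, Pi.sub_apply, h, Finset.sum_add_distrib, Finset.sum_sub_distrib,
    Finset.mul_sum]

lemma pythag' {d : ℕ} {a b : Fin d → ℝ} (h : dotp a b = 0) :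
    sqNorm (a + b) = sqNorm a + sqNorm b := by
  rw [sqNorm_add, h]; ring

lemma dotp_sq_le {d : ℕ} (a b : Fin d → ℝ) : (dotp a b)^2 ≤ sqNorm a * sqNorm b :=
  Finset.sum_mul_sq_le_sq_mul_sq _ _ _

lemma proj_eq_aux {d r : ℕ} (V : Matrix (Fin d) (Fin r) ℝ) (hV : Vᵀ * V = 1)
    (W : Submodule ℝ (Fin d → ℝ)) (hVspan : colSpace V = W)
    (π : (Fin d → ℝ) → (Fin d → ℝ))
    (hπmem : ∀ x, π x ∈ W) (hπorth : ∀ x, ∀ y ∈ W, dotp (x - π x) y = 0)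
    (x : Fin d → ℝ) : π x = (V * Vᵀ).mulVec x := by
  set q := (V * Vᵀ).mulVec x with hq
  have hqrep : q = ∑ j, (Vᵀ.mulVec x j) • (Vᵀ j) := by
    funext l
    simp only [hq, Matrix.mulVec, dotProduct, Matrix.mul_apply, Matrix.transpose_apply,
      Finset.sum_apply, Pi.smul_apply, smul_eq_mul, Finset.sum_mul]
    rw [Finset.sum_comm]
    exact Finset.sum_congr rfl fun j _ => Finset.sum_congr rfl fun m _ => by ring
  have hqmem : q ∈ W := by
    rw [← hVspan, hqrep]
    exact Submodule.sum_mem _ fun j _ =>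
      Submodule.smul_mem _ _ (Submodule.subset_span ⟨j, rfl⟩)
  have hVq : Vᵀ.mulVec q = Vᵀ.mulVec x := by
    rw [hq, Matrix.mulVec_mulVec, ← Matrix.mul_assoc, hV, Matrix.one_mul]
  have hdot : ∀ a : Fin d → ℝ, ∀ j : Fin r, dotp a (Vᵀ j) = Vᵀ.mulVec a j := by
    intro a j
    simp only [dotp, Matrix.mulVec, dotProduct, Matrix.transpose_apply]
    exact Finset.sum_congr rfl fun l _ => by ring
  have hqorth : ∀ y ∈ W, dotp (x - q) y = 0 := by
    intro y hy
    rw [← hVspan] at hy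
    induction hy using Submodule.span_induction with
    | mem z hz =>
      obtain ⟨j, rfl⟩ := hz
      simp [hdot, Matrix.mulVec_sub, hVq]
    | zero => exact dotp_zero_right _
    | add y z _ _ hy hz => rw [dotp_add_right, hy, hz, add_zero]
    | smul t y _ hy => rw [dotp_smul_right, hy, mul_zero]
  have hmem : π x - q ∈ W := Submodule.sub_mem _ (hπmem x) hqmem
  have h1 : dotp (π x - q) (π x - q) = 0 := by
    have e : dotp (π x - q) (π x - q) = dotp (x - q) (π x - q) - dotp (x - π x) (π x - q) := by
      rw [← dotp_sub_left]; congr 1; abel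
    rw [e, hπorth x _ hmem, hqorth _ hmem, sub_zero]
  have h2 : π x - q = 0 := sqNorm_eq_zero (by rw [← dotp_self]; exact h1)
  exact sub_eq_zero.mp h2

lemma row_sum_bound {n d : ℕ} (Y : Matrix (Fin n) (Fin d) ℝ) (c : ℝ) (hc : 0 ≤ c)
    (hspec : ∀ v, sqNorm (Y.mulVec v) ≤ c * sqNorm v)
    (T : Finset (Fin n)) :
    sqNorm (∑ j ∈ T, Y j) ≤ c * T.card := by
  set s : Fin d → ℝ := ∑ j ∈ T, Y j with hs
  have key : sqNorm s = ∑ j ∈ T, (Y.mulVec s) j := by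
    rw [← dotp_self, hs, show dotp (∑ j ∈ T, Y j) (∑ j ∈ T, Y j) = ∑ j ∈ T, dotp (Y j) (∑ j ∈ T, Y j) from dotp_sum_left T (fun j => Y j) _]
    exact Finset.sum_congr rfl fun j _ => rfl
  have cs : (∑ j ∈ T, (Y.mulVec s) j)^2 ≤ (T.card : ℝ) * ∑ j ∈ T, ((Y.mulVec s) j)^2 := by
    have := Finset.sum_mul_sq_le_sq_mul_sq T (fun _ => (1:ℝ)) (fun j => (Y.mulVec s) j)
    simpa using this
  have hsub : ∑ j ∈ T, ((Y.mulVec s) j)^2 ≤ sqNorm (Y.mulVec s) :=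
    Finset.sum_le_sum_of_subset_of_nonneg (Finset.subset_univ T) (fun j _ _ => sq_nonneg _)
  have hb : (sqNorm s)^2 ≤ (T.card : ℝ) * (c * sqNorm s) := by
    calc (sqNorm s)^2 = (∑ j ∈ T, (Y.mulVec s) j)^2 := by rw [key]
    _ ≤ (T.card : ℝ) * ∑ j ∈ T, ((Y.mulVec s) j)^2 := cs
    _ ≤ (T.card : ℝ) * sqNorm (Y.mulVec s) := by
        exact mul_le_mul_of_nonneg_left hsub (Nat.cast_nonneg _)
    _ ≤ (T.card : ℝ) * (c * sqNorm s) := mul_le_mul_of_nonneg_left (hspec s) (Nat.cast_nonneg _)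
  rcases (sqNorm_nonneg s).lt_or_eq with hpos | hzero
  · have : sqNorm s * sqNorm s ≤ (c * T.card) * sqNorm s := by nlinarith
    exact le_of_mul_le_mul_right this hpos
  · rw [← hzero]; positivity

theorem stmt9 {n d mS r : ℕ} (k : ℕ) (hk : 0 < k)
    (A Ak : Matrix (Fin n) (Fin d) ℝ)
    (hAkrank : Ak.rank ≤ k)
    (hAkbest : ∀ X : Matrix (Fin n) (Fin d) ℝ, X.rank ≤ k → frobSq (A - Ak) ≤ frobSq (A - X))
    (η : ℝ) (hη0 : 0 < η) (hη1 : η ≤ 1 / 3)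
    (S : Matrix (Fin mS) (Fin n) ℝ)
    -- `V` has orthonormal columns spanning `row(SA)` (from the SVD `SA = UΣVᵀ`)
    (V : Matrix (Fin d) (Fin r) ℝ) (hV : Vᵀ * V = 1)
    (hVspan : colSpace V = rowSpace (S * A))
    -- `‖A - A V Vᵀ‖₂² ≤ (η/k) ‖A - A_k‖_F²`
    (hspec : ∀ v : Fin d → ℝ,
      sqNorm ((A - A * V * Vᵀ).mulVec v) ≤ η / (k : ℝ) * frobSq (A - Ak) * sqNorm v)
    -- `π` is the orthogonal projection onto `row(SA)`
    (π : (Fin d → ℝ) → (Fin d → ℝ))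
    (hπmem : ∀ x, π x ∈ rowSpace (S * A))
    (hπorth : ∀ x, ∀ y ∈ rowSpace (S * A), dotp (x - π x) y = 0)
    -- `cl` is an optimal `k`-means clustering of the projected points
    (cl : Fin n → Fin k)
    (hclopt : ∀ c' : Fin n → Fin k,
      kmeansCost (fun j => π (fun l => A j l)) cl ≤ kmeansCost (fun j => π (fun l => A j l)) c')
    -- `μ i ∈ row(SA)` are the optimal centers of the clusters of projected points
    (μ : Fin k → Fin d → ℝ) (hμmem : ∀ i, μ i ∈ rowSpace (S * A))
    (hμopt : ∀ (i : Fin k) (ν : Fin d → ℝ),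
      ∑ j ∈ Finset.univ.filter (fun j => cl j = i), sqNorm (π (fun l => A j l) - μ i)
        ≤ ∑ j ∈ Finset.univ.filter (fun j => cl j = i), sqNorm (π (fun l => A j l) - ν))
    -- `μs i` are the optimal centers in `ℝ^d` of the same partition of the original rows
    (μs : Fin k → Fin d → ℝ)
    (hμsopt : ∀ (i : Fin k) (ν : Fin d → ℝ),
      ∑ j ∈ Finset.univ.filter (fun j => cl j = i), sqNorm ((fun l => A j l) - μs i)
        ≤ ∑ j ∈ Finset.univ.filter (fun j => cl j = i), sqNorm ((fun l => A j l) - ν)) :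
    ∑ i : Fin k, ∑ j ∈ Finset.univ.filter (fun j => cl j = i), sqNorm ((fun l => A j l) - μ i)
      ≤ (1 + η) * ∑ i : Fin k, ∑ j ∈ Finset.univ.filter (fun j => cl j = i),
          sqNorm ((fun l => A j l) - μs i) := by
  classical
  set F := frobSq (A - Ak) with hF
  have hF0 : 0 ≤ F := Finset.sum_nonneg fun _ _ => Finset.sum_nonneg fun _ _ => sq_nonneg _
  set c : ℝ := η / k * F with hc
  have hc0 : 0 ≤ c := mul_nonneg (div_nonneg hη0.le (Nat.cast_nonneg k)) hF0
  have hπeq : ∀ x, π x = (V * Vᵀ).mulVec x :=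
    proj_eq_aux V hV (rowSpace (S * A)) hVspan π hπmem hπorth
  set Y := A - A * V * Vᵀ with hYdef
  have hrow : ∀ j : Fin n, (fun l => A j l) - π (fun l => A j l) = Y j := by
    intro j; funext l
    have hpj : π (fun l => A j l) = (V * Vᵀ).mulVec (A j) := hπeq _
    simp only [Pi.sub_apply, hpj, hYdef, Matrix.sub_apply]
    congr 1
    show (V * Vᵀ).mulVec (A j) l = (A * V * Vᵀ) j l
    simp only [Matrix.mulVec, dotProduct, Matrix.mul_apply, Matrix.transpose_apply,
      Finset.sum_mul, Finset.mul_sum]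
    rw [Finset.sum_comm]
    exact Finset.sum_congr rfl fun j' _ => Finset.sum_congr rfl fun m _ => by ring
  -- per cluster bound
  have main : ∀ i : Fin k,
      ∑ j ∈ Finset.univ.filter (fun j => cl j = i), sqNorm ((fun l => A j l) - μ i)
        ≤ (∑ j ∈ Finset.univ.filter (fun j => cl j = i), sqNorm ((fun l => A j l) - μs i))
            + c := by
    intro i
    set T := Finset.univ.filter (fun j => cl j = i) with hT
    set w : Fin d → ℝ := μs i - π (μs i) with hw
    have ha : ∀ j : Fin n, sqNorm ((fun l => A j l) - μ i)
        = sqNorm (Y j) + sqNorm (π (fun l => A j l) - μ i) := by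
      intro j
      have hdec : (fun l => A j l) - μ i
          = ((fun l => A j l) - π (fun l => A j l)) + (π (fun l => A j l) - μ i) := by abel
      have horth : dotp ((fun l => A j l) - π (fun l => A j l)) (π (fun l => A j l) - μ i) = 0 :=
        hπorth _ _ (Submodule.sub_mem _ (hπmem _) (hμmem i))
      rw [hdec, pythag' horth, hrow j]
    have hb : ∀ j : Fin n, sqNorm ((fun l => A j l) - μs i)
        = sqNorm (Y j - w) + sqNorm (π (fun l => A j l) - π (μs i)) := by
      intro j
      have hdec : (fun l => A j l) - μs i
          = (((fun l => A j l) - π (fun l => A j l)) - w)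
              + (π (fun l => A j l) - π (μs i)) := by
        rw [hw]; abel
      have hmemg : π (fun l => A j l) - π (μs i) ∈ rowSpace (S * A) :=
        Submodule.sub_mem _ (hπmem _) (hπmem _)
      have horth : dotp ((((fun l => A j l) - π (fun l => A j l)) - w))
          (π (fun l => A j l) - π (μs i)) = 0 := by
        rw [dotp_sub_left, hπorth _ _ hmemg, hw, hπorth _ _ hmemg, sub_zero]
      rw [hdec, pythag' horth, hrow j]
    calc ∑ j ∈ T, sqNorm ((fun l => A j l) - μ i)
        = ∑ j ∈ T, sqNorm (Y j) + ∑ j ∈ T, sqNorm (π (fun l => A j l) - μ i) := by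
          rw [← Finset.sum_add_distrib]; exact Finset.sum_congr rfl fun j _ => ha j
      _ ≤ ∑ j ∈ T, sqNorm (Y j) + ∑ j ∈ T, sqNorm (π (fun l => A j l) - π (μs i)) :=
          add_le_add le_rfl (hμopt i (π (μs i)))
      _ = ∑ j ∈ T, (sqNorm ((fun l => A j l) - μs i) + (2 * dotp (Y j) w - sqNorm w)) := by
          rw [← Finset.sum_add_distrib]
          exact Finset.sum_congr rfl fun j _ => by rw [hb j, sqNorm_sub (Y j) w]; ring
      _ = (∑ j ∈ T, sqNorm ((fun l => A j l) - μs i))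
            + (2 * dotp (∑ j ∈ T, Y j) w - T.card * sqNorm w) := by
          rw [Finset.sum_add_distrib, show dotp (∑ j ∈ T, Y j) w = ∑ j ∈ T, dotp (Y j) w from dotp_sum_left T (fun j => Y j) w]
          congr 1
          rw [Finset.sum_sub_distrib, Finset.mul_sum, Finset.sum_const, nsmul_eq_mul]
      _ ≤ (∑ j ∈ T, sqNorm ((fun l => A j l) - μs i)) + c := by
          have hsb := row_sum_bound Y c hc0 hspec T
          have hcs := dotp_sq_le (∑ j ∈ T, Y j) w
          have h1 : (dotp (∑ j ∈ T, Y j) w)^2 ≤ c * T.card * sqNorm w := by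
            calc (dotp (∑ j ∈ T, Y j) w)^2 ≤ sqNorm (∑ j ∈ T, Y j) * sqNorm w := hcs
            _ ≤ c * T.card * sqNorm w :=
                mul_le_mul_of_nonneg_right hsb (sqNorm_nonneg w)
          have hcard : (0:ℝ) ≤ (T.card : ℝ) := Nat.cast_nonneg _
          have hwn : 0 ≤ sqNorm w := sqNorm_nonneg w
          have key : 2 * dotp (∑ j ∈ T, Y j) w - T.card * sqNorm w ≤ c := by
            nlinarith [sq_nonneg (c - (T.card : ℝ) * sqNorm w), h1, hc0, hcard, hwn,
              mul_nonneg hcard hwn, sq_nonneg (c + (T.card : ℝ) * sqNorm w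
                - 2 * dotp (∑ j ∈ T, Y j) w)]
          linarith
  -- summing up
  set RHS0 := ∑ i : Fin k, ∑ j ∈ Finset.univ.filter (fun j => cl j = i),
      sqNorm ((fun l => A j l) - μs i) with hR
  have step1 : ∑ i : Fin k, ∑ j ∈ Finset.univ.filter (fun j => cl j = i),
      sqNorm ((fun l => A j l) - μ i) ≤ RHS0 + k * c := by
    calc ∑ i : Fin k, ∑ j ∈ Finset.univ.filter (fun j => cl j = i),
          sqNorm ((fun l => A j l) - μ i)
        ≤ ∑ i : Fin k, ((∑ j ∈ Finset.univ.filter (fun j => cl j = i),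
            sqNorm ((fun l => A j l) - μs i)) + c) := Finset.sum_le_sum fun i _ => main i
      _ = RHS0 + k * c := by
          rw [Finset.sum_add_distrib, Finset.sum_const, Finset.card_univ, Fintype.card_fin,
            nsmul_eq_mul, hR]
  have hkc : (k : ℝ) * c = η * F := by
    rw [hc]
    field_simp
  -- F ≤ RHS0 via the rank-k center matrix
  have hFle : F ≤ RHS0 := by
    set X : Matrix (Fin n) (Fin d) ℝ := Matrix.of fun j l => μs (cl j) l with hX
    have hXfact : X = (Matrix.of fun j i => if cl j = i then (1:ℝ) else 0)
        * (Matrix.of fun i l => μs i l) := by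
      ext j l
      simp [hX, Matrix.mul_apply, ite_mul]
    have hXrank : X.rank ≤ k := by
      rw [hXfact]
      refine le_trans (Matrix.rank_mul_le_right _ _) ?_
      refine le_trans (Matrix.rank_le_card_height _) ?_
      simp
    have h1 : F ≤ frobSq (A - X) := hAkbest X hXrank
    have h2 : frobSq (A - X) = RHS0 := by
      have e1 : frobSq (A - X) = ∑ j : Fin n, sqNorm ((fun l => A j l) - μs (cl j)) := by
        simp [frobSq, sqNorm, hX, Matrix.sub_apply]
      rw [e1, hR]
      rw [← Finset.sum_fiberwise Finset.univ cl
        (fun j => sqNorm ((fun l => A j l) - μs (cl j)))]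
      refine Finset.sum_congr rfl fun i _ => Finset.sum_congr rfl fun j hj => ?_
      have : cl j = i := (Finset.mem_filter.mp hj).2
      rw [this]
    linarith
  have hR0 : 0 ≤ RHS0 := by
    refine Finset.sum_nonneg fun i _ => Finset.sum_nonneg fun j _ => sqNorm_nonneg _
  calc ∑ i : Fin k, ∑ j ∈ Finset.univ.filter (fun j => cl j = i),
        sqNorm ((fun l => A j l) - μ i)
      ≤ RHS0 + k * c := step1
    _ = RHS0 + η * F := by rw [hkc]
    _ ≤ RHS0 + η * RHS0 := by nlinarith
    _ = (1 + η) * RHS0 := by ring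
end

section
/- There is an absolute constant c > 0 such that the following holds. Let u_1,…,u_t ∈ ℝ^d be unit vectors such that for every pair i < j ≤ t, |⟨u_i, u_j⟩| ≤ ε, where 0 ≤ ε ≤ c·t^{−2}. Then there exists an orthonormal basis e_1,…,e_t of the subspace spanned by u_1,…,u_t such that for each i ≤ t, u_i = ∑_{j=1}^{i} a_{i,j} e_j, where a_{i,i}² ≥ 1 − ∑_{j=1}^{i−1} j²·ε², and a_{i,j}² ≤ j²·ε² for each j < i. -/
open scoped RealInnerProductSpace


-- Linear independence from near-orthonormality
lemma li_aux {d t : ℕ} (u : Fin t → EuclideanSpace ℝ (Fin d)) (ε : ℝ)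
    (h1 : ∀ i, ‖u i‖ = 1)
    (hpair : ∀ i j : Fin t, i ≠ j → |⟪u i, u j⟫| ≤ ε)
    (hsmall : ε * t < 1) : LinearIndependent ℝ u := by
  rw [Fintype.linearIndependent_iff]
  intro g hg
  by_contra hc
  push_neg at hc
  obtain ⟨i0, hi0⟩ := hc
  obtain ⟨k, -, hk⟩ := Finset.exists_max_image Finset.univ (fun i => |g i|) ⟨i0, Finset.mem_univ i0⟩
  have hgk : 0 < |g k| := by
    have := hk i0 (Finset.mem_univ i0)
    have : 0 < |g i0| := abs_pos.2 hi0
    linarith [hk i0 (Finset.mem_univ i0)]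
  have hz : ⟪u k, ∑ i, g i • u i⟫ = 0 := by rw [hg, inner_zero_right]
  rw [inner_sum] at hz
  simp only [real_inner_smul_right] at hz
  have hsplit : g k * ⟪u k, u k⟫ + ∑ i ∈ Finset.univ.erase k, g i * ⟪u k, u i⟫ = 0 := by
    rw [← Finset.add_sum_erase _ _ (Finset.mem_univ k)] at hz
    exact hz
  have hkk : ⟪u k, u k⟫ = 1 := by
    rw [real_inner_self_eq_norm_sq, h1 k]; norm_num
  rw [hkk, mul_one] at hsplit
  have hb : |g k| ≤ ∑ i ∈ Finset.univ.erase k, |g i| * ε := by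
    have : g k = -∑ i ∈ Finset.univ.erase k, g i * ⟪u k, u i⟫ := by linarith
    rw [this, abs_neg]
    refine (Finset.abs_sum_le_sum_abs _ _).trans (Finset.sum_le_sum fun i hi => ?_)
    rw [abs_mul]
    exact mul_le_mul_of_nonneg_left (hpair k i (Finset.ne_of_mem_erase hi).symm) (abs_nonneg _)
  have hεnn : 0 ≤ ε := by
    rcases Finset.eq_empty_or_nonempty (Finset.univ.erase k) with h | ⟨i, hi⟩
    · rw [h] at hb; simp at hb; simp [hb] at hgk
    · linarith [hpair k i (Finset.ne_of_mem_erase hi).symm, abs_nonneg ⟪u k, u i⟫]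
  have hb2 : ∑ i ∈ Finset.univ.erase k, |g i| * ε ≤ (t - 1) * (|g k| * ε) := by
    have := Finset.sum_le_card_nsmul (Finset.univ.erase k) (fun i => |g i| * ε) (|g k| * ε)
      (fun i _ => mul_le_mul_of_nonneg_right (hk i (Finset.mem_univ i)) hεnn)
    rw [Finset.card_erase_of_mem (Finset.mem_univ k), Finset.card_univ, Fintype.card_fin] at this
    have ht : 1 ≤ t := Nat.one_le_iff_ne_zero.2 (by rintro rfl; exact absurd k.2 (by omega))
    calc ∑ i ∈ Finset.univ.erase k, |g i| * ε ≤ (t - 1 : ℕ) • (|g k| * ε) := this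
      _ = ((t : ℝ) - 1) * (|g k| * ε) := by
          rw [nsmul_eq_mul]; congr 1; push_cast [ht]; ring
  nlinarith [hgk, hεnn, mul_nonneg (abs_nonneg (g k)) hεnn]


lemma expand_aux {d t : ℕ} (u : Fin t → EuclideanSpace ℝ (Fin d))
    (e : Fin t → EuclideanSpace ℝ (Fin d)) (he : Orthonormal ℝ e) (i : Fin t)
    (hmem : u i ∈ Submodule.span ℝ (e '' Set.Iic i)) :
    u i = ∑ j ∈ Finset.univ.filter (· ≤ i), ⟪e j, u i⟫ • e j := by
  set S := Finset.univ.filter (· ≤ i) with hS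
  set v := u i - ∑ j ∈ S, ⟪e j, u i⟫ • e j with hv
  have hgen : ∀ k ∈ S, e k ∈ (e '' Set.Iic i) := by
    intro k hk
    exact Set.mem_image_of_mem e (by simpa [hS] using hk)
  have hsum_mem : (∑ j ∈ S, ⟪e j, u i⟫ • e j) ∈ Submodule.span ℝ (e '' Set.Iic i) :=
    Submodule.sum_mem _ fun j hj =>
      Submodule.smul_mem _ _ (Submodule.subset_span (hgen j hj))
  have hvK : v ∈ Submodule.span ℝ (e '' Set.Iic i) := Submodule.sub_mem _ hmem hsum_mem
  have hperp : ∀ k, k ≤ i → ⟪e k, v⟫ = 0 := by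
    intro k hk
    rw [hv, inner_sub_right, he.inner_right_sum (fun j => ⟪e j, u i⟫)
      (by simp [hS, hk] : k ∈ S)]
    ring
  have hvperp : ∀ w ∈ Submodule.span ℝ (e '' Set.Iic i), ⟪w, v⟫ = 0 := by
    intro w hw
    induction hw using Submodule.span_induction with
    | mem x hx =>
      obtain ⟨k, hk, rfl⟩ := hx
      exact hperp k hk
    | zero => exact inner_zero_left v
    | add x y _ _ hx hy => rw [inner_add_left, hx, hy]; ring
    | smul c x _ hx => rw [real_inner_smul_left, hx]; ring
  have : ⟪v, v⟫ = 0 := hvperp v hvK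
  have hv0 : v = 0 := by rwa [inner_self_eq_zero] at this
  rw [hv, sub_eq_zero] at hv0
  exact hv0

lemma sum_bound (t : ℕ) (j : Fin t) :
    ∑ k ∈ Finset.univ.filter (· < j), ((k:ℝ)+1)^2 ≤ ((j:ℝ)) * ((j:ℝ))^2 := by
  have hfe : Finset.univ.filter (· < j) = Finset.Iio j := by ext k; simp
  have hcard : (Finset.univ.filter (· < j)).card = (j:ℕ) := by rw [hfe, Fin.card_Iio]
  calc ∑ k ∈ Finset.univ.filter (· < j), ((k:ℝ)+1)^2
      ≤ ∑ _k ∈ Finset.univ.filter (· < j), ((j:ℝ))^2 := by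
        refine Finset.sum_le_sum fun k hk => ?_
        have hkj : (k:ℕ) < (j:ℕ) := by simpa using hk
        have : (k:ℝ) + 1 ≤ (j:ℝ) := by exact_mod_cast hkj
        nlinarith [(Nat.cast_nonneg (k:ℕ) : (0:ℝ) ≤ ((k:ℕ):ℝ))]
    _ = ((j:ℕ):ℝ) * ((j:ℝ))^2 := by rw [Finset.sum_const, hcard, nsmul_eq_mul]

theorem stmt11 :
    ∃ c : ℝ, 0 < c ∧ ∀ (d t : ℕ) (u : Fin t → EuclideanSpace ℝ (Fin d)) (ε : ℝ),
      0 ≤ ε → ε ≤ c / (t : ℝ) ^ 2 →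
      (∀ i, ‖u i‖ = 1) →
      (∀ i j : Fin t, i < j → |⟪u i, u j⟫| ≤ ε) →
      ∃ (e : Fin t → EuclideanSpace ℝ (Fin d)) (a : Fin t → Fin t → ℝ),
        Orthonormal ℝ e ∧
        Submodule.span ℝ (Set.range e) = Submodule.span ℝ (Set.range u) ∧
        ∀ i : Fin t,
          u i = (∑ j ∈ Finset.univ.filter (· ≤ i), a i j • e j) ∧
          1 - (∑ j ∈ Finset.univ.filter (· < i), ((j : ℝ) + 1) ^ 2 * ε ^ 2) ≤ (a i i) ^ 2 ∧
          ∀ j : Fin t, j < i → (a i j) ^ 2 ≤ ((j : ℝ) + 1) ^ 2 * ε ^ 2 := by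
  refine ⟨1/10, by norm_num, ?_⟩
  intro d t u ε hε0 hεc h1 hpair
  rcases Nat.eq_zero_or_pos t with rfl | htpos
  · exact ⟨u, fun _ _ => 0, ⟨fun i => i.elim0, fun i => i.elim0⟩, rfl, fun i => i.elim0⟩
  haveI : NeZero t := ⟨htpos.ne'⟩
  haveI : WellFoundedLT (Fin t) := inferInstance
  -- symmetric pairwise bound
  have hpair' : ∀ i j : Fin t, i ≠ j → |⟪u i, u j⟫| ≤ ε := by
    intro i j hij
    rcases lt_or_gt_of_ne hij with h | h
    · exact hpair i j h
    · rw [real_inner_comm]; exact hpair j i h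
  -- ε * t^2 ≤ 1/10 when t > 0
  have ht' : (0:ℝ) < (t:ℝ)^2 := by positivity
  have hεt2 : ε * (t:ℝ)^2 ≤ 1/10 := by
    rw [← le_div_iff₀ ht']
    exact hεc
  have ht1 : (1:ℝ) ≤ (t:ℝ) := by exact_mod_cast htpos
  have hsmall : ε * t < 1 := by nlinarith
  have hLI : LinearIndependent ℝ u := li_aux u ε h1 hpair' hsmall
  obtain ⟨e, hedef⟩ : ∃ e : Fin t → EuclideanSpace ℝ (Fin d), e = InnerProductSpace.gramSchmidtNormed ℝ u :=
    ⟨_, rfl⟩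
  have he : Orthonormal ℝ e := hedef ▸ InnerProductSpace.gramSchmidtNormed_orthonormal hLI
  have hspan : Submodule.span ℝ (Set.range e) = Submodule.span ℝ (Set.range u) := by
    rw [hedef]
    exact (InnerProductSpace.span_gramSchmidtNormed_range u).trans (InnerProductSpace.span_gramSchmidt ℝ u)
  have hmem : ∀ i : Fin t, u i ∈ Submodule.span ℝ (e '' Set.Iic i) := by
    intro i
    rw [hedef, InnerProductSpace.span_gramSchmidtNormed, InnerProductSpace.span_gramSchmidt_Iic]
    exact Submodule.subset_span ⟨i, le_refl i, rfl⟩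
  obtain ⟨a, ha⟩ : ∃ a : Fin t → Fin t → ℝ, a = fun i j => ⟪e j, u i⟫ := ⟨_, rfl⟩
  have hexp : ∀ i : Fin t, u i = ∑ j ∈ Finset.univ.filter (· ≤ i), a i j • e j := by
    intro i
    rw [ha]
    exact expand_aux u e he i (hmem i)
  have hinner : ∀ i j : Fin t,
      ⟪u j, u i⟫ = ∑ k ∈ Finset.univ.filter (· ≤ j), a j k * a i k := by
    intro i j
    conv_lhs => rw [hexp j]
    rw [sum_inner]
    refine Finset.sum_congr rfl fun k _ => ?_
    rw [ha, real_inner_smul_left]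
  have hnorm : ∀ j : Fin t, ∑ k ∈ Finset.univ.filter (· ≤ j), (a j k)^2 = 1 := by
    intro j
    have := (hinner j j).symm
    rw [real_inner_self_eq_norm_sq, h1 j] at this
    simpa [sq] using this
  have hins : ∀ j : Fin t, Finset.univ.filter (· ≤ j)
      = insert j (Finset.univ.filter (· < j)) := by
    intro j
    ext k
    simp [le_iff_lt_or_eq]
    tauto
  have hnm : ∀ j : Fin t, j ∉ Finset.univ.filter (· < j) := by
    intro j; simp
  -- main induction
  have key : ∀ n : ℕ, ∀ j i : Fin t, (j : ℕ) = n → j < i →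
      (a i j)^2 ≤ ((j:ℝ)+1)^2 * ε^2 := by
    intro n
    induction n using Nat.strong_induction_on with
    | _ n IH =>
    intro j i hjn hji
    obtain ⟨Sj, hSjdef⟩ : ∃ S : ℝ, S = ∑ k ∈ Finset.univ.filter (· < j), ((k:ℝ)+1)^2 :=
      ⟨_, rfl⟩
    have hSnn : 0 ≤ Sj := hSjdef ▸ Finset.sum_nonneg fun k _ => by positivity
    have hIHj : ∀ k : Fin t, k < j → (a j k)^2 ≤ ((k:ℝ)+1)^2 * ε^2 := by
      intro k hk
      have hkn : (k:ℕ) < n := by rw [← hjn]; exact hk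
      exact IH k hkn k j rfl hk
    have hIHi : ∀ k : Fin t, k < j → (a i k)^2 ≤ ((k:ℝ)+1)^2 * ε^2 := by
      intro k hk
      have hkn : (k:ℕ) < n := by rw [← hjn]; exact hk
      exact IH k hkn k i rfl (hk.trans hji)
    -- diagonal lower bound for a j j
    have hn1 := hnorm j
    rw [hins j, Finset.sum_insert (hnm j)] at hn1
    have hsum_lt : ∑ k ∈ Finset.univ.filter (· < j), (a j k)^2 ≤ ε^2 * Sj := by
      rw [hSjdef, Finset.mul_sum]
      exact Finset.sum_le_sum fun k hk => by
        have := hIHj k (by simpa using hk); linarith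
    have hdiag : 1 - ε^2 * Sj ≤ (a j j)^2 := by linarith only [hn1, hsum_lt]
    -- cross term bound
    have hcross : |a j j * a i j| ≤ ε + ε^2 * Sj := by
      have h5 := hinner i j
      rw [hins j, Finset.sum_insert (hnm j)] at h5
      have h6 : a j j * a i j = ⟪u j, u i⟫ - ∑ k ∈ Finset.univ.filter (· < j), a j k * a i k := by
        rw [h5]; ring
      rw [h6]
      have h7 : |⟪u j, u i⟫| ≤ ε := hpair' j i (ne_of_lt hji)
      have h8 : |∑ k ∈ Finset.univ.filter (· < j), a j k * a i k| ≤ ε^2 * Sj := by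
        refine (Finset.abs_sum_le_sum_abs _ _).trans ?_
        rw [hSjdef, Finset.mul_sum]
        refine Finset.sum_le_sum fun k hk => ?_
        have hkj : k < j := by simpa using hk
        have b1 := hIHj k hkj
        have b2 := hIHi k hkj
        have hb : (0:ℝ) ≤ ((k:ℝ)+1)^2 * ε^2 := by positivity
        nlinarith only [b1, b2, hb, sq_abs (a j k * a i k), abs_nonneg (a j k * a i k), sq_nonneg (a j k), sq_nonneg (a i k)]
      calc |⟪u j, u i⟫ - ∑ k ∈ Finset.univ.filter (· < j), a j k * a i k|
          ≤ |⟪u j, u i⟫| + |∑ k ∈ Finset.univ.filter (· < j), a j k * a i k| := abs_sub _ _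
        _ ≤ ε + ε^2 * Sj := add_le_add h7 h8
    -- numeric bounds
    have hj0' : (0:ℝ) ≤ ((j:ℕ):ℝ) := Nat.cast_nonneg _
    have hm1 : 1 ≤ ((j:ℝ)+1) := by linarith
    have hmt : ((j:ℝ)+1) ≤ (t:ℝ) := by
      have h' : (j:ℕ) + 1 ≤ t := j.2
      have : ((j:ℕ):ℝ) + 1 ≤ (t:ℝ) := by exact_mod_cast h'
      linarith
    have hεm : ε * ((j:ℝ)+1)^2 ≤ 1/10 := by
      have hsq : ((j:ℝ)+1)^2 ≤ (t:ℝ)^2 := by nlinarith only [hmt, hm1]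
      calc ε * ((j:ℝ)+1)^2 ≤ ε * (t:ℝ)^2 := mul_le_mul_of_nonneg_left hsq hε0
        _ ≤ 1/10 := hεt2
    have hScard : Sj ≤ ((j:ℝ)) * ((j:ℝ))^2 := by rw [hSjdef]; exact sum_bound t j
    have hSm : Sj ≤ ((j:ℝ)+1)^3 := by nlinarith only [hScard, hj0']
    have hεS : ε * Sj ≤ ((j:ℝ)+1)/10 := by
      nlinarith only [hSm, hε0, hεm, hm1, hSnn, hj0']
    have hε2S : ε^2 * Sj ≤ 1/100 := by
      nlinarith only [hεS, hε0, hεm, hm1, hSnn, mul_le_mul_of_nonneg_left hεS hε0]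
    -- key numeric inequality
    have hkey : (ε + ε^2*Sj)^2 ≤ ((j:ℝ)+1)^2 * ε^2 * (1 - ε^2*Sj) := by
      rcases Nat.eq_zero_or_pos n with hn0 | hn1'
      · have hje : Finset.univ.filter (· < j) = ∅ := by
          ext k
          simp only [Finset.mem_filter, Finset.mem_univ, true_and, Finset.notMem_empty,
            iff_false]
          intro hkj
          have : (k:ℕ) < (j:ℕ) := hkj
          omega
        have hS0 : Sj = 0 := by rw [hSjdef, hje, Finset.sum_empty]
        have hj0 : ((j:ℕ):ℝ) = 0 := by rw [hjn, hn0]; norm_num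
        rw [hS0, hj0]
        nlinarith only [sq_nonneg ε]
      · have hm2 : 2 ≤ ((j:ℝ)+1) := by
          have : 1 ≤ (j:ℕ) := by omega
          have : (1:ℝ) ≤ ((j:ℕ):ℝ) := by exact_mod_cast this
          linarith
        have h9 : (1 + ε*Sj)^2 ≤ ((j:ℝ)+1)^2 * (1 - ε^2*Sj) := by
          nlinarith only [hεS, hε2S, hm2, mul_nonneg hε0 hSnn]
        calc (ε + ε^2*Sj)^2 = ε^2 * (1 + ε*Sj)^2 := by ring
          _ ≤ ε^2 * (((j:ℝ)+1)^2 * (1 - ε^2*Sj)) := by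
              exact mul_le_mul_of_nonneg_left h9 (sq_nonneg ε)
          _ = ((j:ℝ)+1)^2 * ε^2 * (1 - ε^2*Sj) := by ring
    -- conclude
    have hP : (0:ℝ) < 1 - ε^2*Sj := by linarith only [hε2S]
    have hfin : (a i j)^2 * (1 - ε^2*Sj) ≤ ((j:ℝ)+1)^2 * ε^2 * (1 - ε^2*Sj) := by
      have e1 : (a i j)^2 * (1 - ε^2*Sj) ≤ (a i j)^2 * (a j j)^2 :=
        mul_le_mul_of_nonneg_left hdiag (sq_nonneg _)
      have e2 : (a i j)^2 * (a j j)^2 = (a j j * a i j)^2 := by ring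
      have e3 : (a j j * a i j)^2 ≤ (ε + ε^2*Sj)^2 := by
        nlinarith only [sq_abs (a j j * a i j), abs_nonneg (a j j * a i j), hcross,
          mul_nonneg hε0 (mul_nonneg (sq_nonneg ε) hSnn)]
      linarith only [e1, e2, e3, hkey]
    exact le_of_mul_le_mul_right hfin hP
  refine ⟨e, a, he, hspan, fun i => ⟨hexp i, ?_, fun j hj => key j j i rfl hj⟩⟩
  -- diagonal bound
  have h2 := hnorm i
  rw [hins i, Finset.sum_insert (hnm i)] at h2
  have h3 : ∑ k ∈ Finset.univ.filter (· < i), (a i k)^2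
      ≤ ∑ k ∈ Finset.univ.filter (· < i), ((k:ℝ)+1)^2 * ε^2 :=
    Finset.sum_le_sum fun k hk => key k k i rfl (by simpa using hk)
  linarith only [h2, h3]
end

section
/- There is an absolute constant c > 0 such that the following holds. Let w_1,…,w_k ∈ ℝ^d be nonzero vectors whose normalized versions w̄_i = w_i/‖w_i‖ satisfy |⟨w̄_i, w̄_j⟩| ≤ β for all i ≠ j, where 0 ≤ β ≤ c·k^{−3/2}. Let v ∈ ℝ^d be a unit vector with |⟨v, w̄_j⟩| ≤ β for every j ∈ [k] with j ≠ k−1. Let e_1,…,e_k be the Gram–Schmidt orthonormal basis of w̄_1,…,w̄_k. Then ⟨v, e_k⟩² ≤ 4β²·k². -/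
open scoped RealInnerProductSpace

private lemma auxA13 {k : ℕ} (hk : 2 ≤ k) (β : ℝ) (hβ0 : 0 ≤ β) (hβk : β * k ≤ 1/100)
    (b : Fin k → Fin k → ℝ)
    (hb0 : ∀ i j : Fin k, i < j → b i j = 0)
    (hbd : ∀ j : Fin k, 0 < b j j)
    (hS : ∀ i : Fin k, ∑ m, b i m * b i m = 1)
    (hip : ∀ i j : Fin k, i ≠ j → |∑ m, b i m * b j m| ≤ β) :
    ∀ j : Fin k, (99/100 : ℝ) ≤ b j j ∧ ∀ i : Fin k, i ≠ j → |b i j| ≤ 2*β := by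
  have hk2 : (2:ℝ) ≤ (k:ℝ) := by exact_mod_cast hk
  have hβ : β ≤ 1/100 := by nlinarith
  have key : ∀ n : ℕ, ∀ j : Fin k, (j:ℕ) = n →
      (99/100 : ℝ) ≤ b j j ∧ ∀ i : Fin k, i ≠ j → |b i j| ≤ 2*β := by
    intro n
    induction n using Nat.strong_induction_on with
    | _ n IH =>
      intro j hjn
      have IH' : ∀ m : Fin k, m < j →
          (99/100 : ℝ) ≤ b m m ∧ ∀ i : Fin k, i ≠ m → |b i m| ≤ 2*β := by
        intro m hm
        have hmv : (m:ℕ) < (j:ℕ) := hm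
        exact IH (m:ℕ) (by omega) m rfl
      have hdiag : (99/100 : ℝ) ≤ b j j := by
        have hsplit : b j j * b j j + ∑ m ∈ Finset.univ.erase j, b j m * b j m
            = ∑ m, b j m * b j m :=
          Finset.add_sum_erase _ (fun m => b j m * b j m) (Finset.mem_univ j)
        have hterm : ∀ m ∈ Finset.univ.erase j, b j m * b j m ≤ 4*(β*β) := by
          intro m hm
          have hmj : m ≠ j := Finset.ne_of_mem_erase hm
          rcases lt_or_gt_of_ne hmj with h1 | h1
          · have h2 : |b j m| ≤ 2*β := (IH' m h1).2 j h1.ne'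
            nlinarith [abs_nonneg (b j m), abs_mul_abs_self (b j m)]
          · rw [hb0 j m h1]; nlinarith
        have hE : ∑ m ∈ Finset.univ.erase j, b j m * b j m ≤ (k:ℝ) * (4*(β*β)) := by
          calc ∑ m ∈ Finset.univ.erase j, b j m * b j m
              ≤ ∑ _m ∈ Finset.univ.erase j, 4*(β*β) := Finset.sum_le_sum hterm
            _ ≤ ∑ _m : Fin k, 4*(β*β) := by
                apply Finset.sum_le_sum_of_subset_of_nonneg (Finset.erase_subset _ _)
                intros; positivity
            _ = (k:ℝ) * (4*(β*β)) := by
                rw [Finset.sum_const, Finset.card_univ, Fintype.card_fin, nsmul_eq_mul]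
        have h1 := hS j
        nlinarith [hbd j, mul_le_mul_of_nonneg_left hβk hβ0]
      refine ⟨hdiag, ?_⟩
      intro i hij
      rcases lt_or_gt_of_ne hij with hlt | hgt
      · rw [hb0 i j hlt]; simp; linarith
      · -- j < i
        have hsplit : b i j * b j j + ∑ m ∈ Finset.univ.erase j, b i m * b j m
            = ∑ m, b i m * b j m :=
          Finset.add_sum_erase _ (fun m => b i m * b j m) (Finset.mem_univ j)
        have hterm : ∀ m ∈ Finset.univ.erase j, |b i m * b j m| ≤ 4*(β*β) := by
          intro m hm
          have hmj : m ≠ j := Finset.ne_of_mem_erase hm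
          rcases lt_or_gt_of_ne hmj with h1 | h1
          · have h2 : |b i m| ≤ 2*β := (IH' m h1).2 i (h1.trans hgt).ne'
            have h3 : |b j m| ≤ 2*β := (IH' m h1).2 j h1.ne'
            calc |b i m * b j m| = |b i m| * |b j m| := abs_mul _ _
              _ ≤ (2*β) * (2*β) := by
                  apply mul_le_mul h2 h3 (abs_nonneg _) (by positivity)
              _ = 4*(β*β) := by ring
          · rw [hb0 j m h1]; simp; positivity
        have hE : |∑ m ∈ Finset.univ.erase j, b i m * b j m| ≤ (k:ℝ) * (4*(β*β)) := by
          calc |∑ m ∈ Finset.univ.erase j, b i m * b j m|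
              ≤ ∑ m ∈ Finset.univ.erase j, |b i m * b j m| := Finset.abs_sum_le_sum_abs _ _
            _ ≤ ∑ _m ∈ Finset.univ.erase j, 4*(β*β) := Finset.sum_le_sum hterm
            _ ≤ ∑ _m : Fin k, 4*(β*β) := by
                apply Finset.sum_le_sum_of_subset_of_nonneg (Finset.erase_subset _ _)
                intros; positivity
            _ = (k:ℝ) * (4*(β*β)) := by
                rw [Finset.sum_const, Finset.card_univ, Fintype.card_fin, nsmul_eq_mul]
        have hip' := hip i j hij
        have habs : |b i j| * b j j = |b i j * b j j| := by
          rw [abs_mul, abs_of_pos (hbd j)]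
        have heq : b i j * b j j = (∑ m, b i m * b j m)
            - ∑ m ∈ Finset.univ.erase j, b i m * b j m := by linarith
        have h2 : |b i j * b j j| ≤ β + (k:ℝ) * (4*(β*β)) := by
          rw [heq]
          calc |(∑ m, b i m * b j m) - ∑ m ∈ Finset.univ.erase j, b i m * b j m|
              ≤ |∑ m, b i m * b j m| + |∑ m ∈ Finset.univ.erase j, b i m * b j m| :=
                abs_sub _ _
            _ ≤ β + (k:ℝ) * (4*(β*β)) := add_le_add hip' hE
        nlinarith [abs_nonneg (b i j), mul_le_mul_of_nonneg_left hβk (by linarith : (0:ℝ) ≤ 4*β),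
          mul_le_mul_of_nonneg_left hdiag (abs_nonneg (b i j))]
  intro j; exact key (j:ℕ) j rfl

private lemma auxB13 {k : ℕ} (hk : 2 ≤ k) (β : ℝ) (hβ0 : 0 ≤ β) (hβk : β * k ≤ 1/100)
    (b : Fin k → Fin k → ℝ) (t : Fin k → ℝ)
    (hb0 : ∀ i j : Fin k, i < j → b i j = 0)
    (hA : ∀ j : Fin k, (99/100 : ℝ) ≤ b j j ∧ ∀ i : Fin k, i ≠ j → |b i j| ≤ 2*β)
    (ht1 : ∀ m, |t m| ≤ 1)
    (hvt : ∀ j : Fin k, (j:ℕ) ≠ k - 2 → |∑ m, b j m * t m| ≤ β) :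
    ∀ i : Fin k, (i:ℕ) = k - 1 → t i ^ 2 ≤ 4 * β^2 * (k:ℝ)^2 := by
  have hk2 : (2:ℝ) ≤ (k:ℝ) := by exact_mod_cast hk
  have hβ : β ≤ 1/100 := by nlinarith
  -- Step 1: all coordinates below k-2 are small
  have hB : ∀ n : ℕ, ∀ j : Fin k, (j:ℕ) = n → (j:ℕ) ≠ k - 2 → (j:ℕ) ≠ k - 1 → |t j| ≤ 2*β := by
    intro n
    induction n using Nat.strong_induction_on with
    | _ n IH =>
      intro j hjn hj2 hj1
      have hjlt : (j:ℕ) < k - 2 := by have := j.isLt; omega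
      have hsplit : b j j * t j + ∑ m ∈ Finset.univ.erase j, b j m * t m
          = ∑ m, b j m * t m :=
        Finset.add_sum_erase _ (fun m => b j m * t m) (Finset.mem_univ j)
      have hterm : ∀ m ∈ Finset.univ.erase j, |b j m * t m| ≤ 4*(β*β) := by
        intro m hm
        have hmj : m ≠ j := Finset.ne_of_mem_erase hm
        rcases lt_or_gt_of_ne hmj with h1 | h1
        · have hmlt : (m:ℕ) < (j:ℕ) := h1
          have h2 : |b j m| ≤ 2*β := (hA m).2 j h1.ne'
          have h3 : |t m| ≤ 2*β := IH (m:ℕ) (hjn ▸ hmlt) m rfl (by omega) (by omega)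
          calc |b j m * t m| = |b j m| * |t m| := abs_mul _ _
            _ ≤ (2*β) * (2*β) := by
                apply mul_le_mul h2 h3 (abs_nonneg _) (by positivity)
            _ = 4*(β*β) := by ring
        · rw [hb0 j m h1]; simp; positivity
      have hE : |∑ m ∈ Finset.univ.erase j, b j m * t m| ≤ (k:ℝ) * (4*(β*β)) := by
        calc |∑ m ∈ Finset.univ.erase j, b j m * t m|
            ≤ ∑ m ∈ Finset.univ.erase j, |b j m * t m| := Finset.abs_sum_le_sum_abs _ _
          _ ≤ ∑ _m ∈ Finset.univ.erase j, 4*(β*β) := Finset.sum_le_sum hterm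
          _ ≤ ∑ _m : Fin k, 4*(β*β) := by
              apply Finset.sum_le_sum_of_subset_of_nonneg (Finset.erase_subset _ _)
              intros; positivity
          _ = (k:ℝ) * (4*(β*β)) := by
              rw [Finset.sum_const, Finset.card_univ, Fintype.card_fin, nsmul_eq_mul]
      have hv := hvt j hj2
      have habs : |t j| * b j j = |b j j * t j| := by
        rw [abs_mul, abs_of_pos (by linarith [(hA j).1] : (0:ℝ) < b j j), mul_comm]
      have heq : b j j * t j = (∑ m, b j m * t m)
          - ∑ m ∈ Finset.univ.erase j, b j m * t m := by linarith
      have h2 : |b j j * t j| ≤ β + (k:ℝ) * (4*(β*β)) := by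
        rw [heq]
        calc |(∑ m, b j m * t m) - ∑ m ∈ Finset.univ.erase j, b j m * t m|
            ≤ |∑ m, b j m * t m| + |∑ m ∈ Finset.univ.erase j, b j m * t m| := abs_sub _ _
          _ ≤ β + (k:ℝ) * (4*(β*β)) := add_le_add hv hE
      nlinarith [abs_nonneg (t j), mul_le_mul_of_nonneg_left hβk (by linarith : (0:ℝ) ≤ 4*β),
        mul_le_mul_of_nonneg_left (hA j).1 (abs_nonneg (t j))]
  -- Step 2: the final coordinate
  intro i hi
  have hm0lt : k - 2 < k := by omega
  set m0 : Fin k := ⟨k - 2, hm0lt⟩ with hm0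
  have hm0i : m0 ≠ i := by
    intro h
    have : (m0:ℕ) = (i:ℕ) := congrArg Fin.val h
    simp [hm0, hi] at this; omega
  have hm0mem : m0 ∈ Finset.univ.erase i := Finset.mem_erase.mpr ⟨hm0i, Finset.mem_univ _⟩
  have hsplit1 : b i i * t i + ∑ m ∈ Finset.univ.erase i, b i m * t m
      = ∑ m, b i m * t m :=
      Finset.add_sum_erase _ (fun m => b i m * t m) (Finset.mem_univ i)
  have hsplit2 : b i m0 * t m0 + ∑ m ∈ (Finset.univ.erase i).erase m0, b i m * t m
      = ∑ m ∈ Finset.univ.erase i, b i m * t m :=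
      Finset.add_sum_erase _ (fun m => b i m * t m) hm0mem
  have hterm : ∀ m ∈ (Finset.univ.erase i).erase m0, |b i m * t m| ≤ 4*(β*β) := by
    intro m hm
    have hmm0 : m ≠ m0 := Finset.ne_of_mem_erase hm
    have hmi : m ≠ i := Finset.ne_of_mem_erase (Finset.mem_of_mem_erase hm)
    have hm2 : (m:ℕ) ≠ k - 2 := fun h => hmm0 (Fin.ext (by simp [hm0, h]))
    have hm1 : (m:ℕ) ≠ k - 1 := fun h => hmi (Fin.ext (by rw [h, hi]))
    rcases lt_or_gt_of_ne hmi with h1 | h1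
    · have h2 : |b i m| ≤ 2*β := (hA m).2 i h1.ne'
      have h3 : |t m| ≤ 2*β := hB (m:ℕ) m rfl hm2 hm1
      calc |b i m * t m| = |b i m| * |t m| := abs_mul _ _
        _ ≤ (2*β) * (2*β) := by
            apply mul_le_mul h2 h3 (abs_nonneg _) (by positivity)
        _ = 4*(β*β) := by ring
    · rw [hb0 i m h1]; simp; positivity
  have hE : |∑ m ∈ (Finset.univ.erase i).erase m0, b i m * t m| ≤ (k:ℝ) * (4*(β*β)) := by
    calc |∑ m ∈ (Finset.univ.erase i).erase m0, b i m * t m|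
        ≤ ∑ m ∈ (Finset.univ.erase i).erase m0, |b i m * t m| := Finset.abs_sum_le_sum_abs _ _
      _ ≤ ∑ _m ∈ (Finset.univ.erase i).erase m0, 4*(β*β) := Finset.sum_le_sum hterm
      _ ≤ ∑ _m : Fin k, 4*(β*β) := by
          apply Finset.sum_le_sum_of_subset_of_nonneg
            ((Finset.erase_subset _ _).trans (Finset.erase_subset _ _))
          intros; positivity
      _ = (k:ℝ) * (4*(β*β)) := by
          rw [Finset.sum_const, Finset.card_univ, Fintype.card_fin, nsmul_eq_mul]
  have hm0term : |b i m0 * t m0| ≤ 2*β := by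
    calc |b i m0 * t m0| = |b i m0| * |t m0| := abs_mul _ _
      _ ≤ (2*β) * 1 := by
          apply mul_le_mul ((hA m0).2 i (Ne.symm hm0i)) (ht1 m0) (abs_nonneg _) (by positivity)
      _ = 2*β := by ring
  have hi2 : (i:ℕ) ≠ k - 2 := by omega
  have hv := hvt i hi2
  have heq : b i i * t i = (∑ m, b i m * t m) - b i m0 * t m0
      - ∑ m ∈ (Finset.univ.erase i).erase m0, b i m * t m := by linarith
  have h2 : |b i i * t i| ≤ β + 2*β + (k:ℝ) * (4*(β*β)) := by
    rw [heq]
    calc |(∑ m, b i m * t m) - b i m0 * t m0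
          - ∑ m ∈ (Finset.univ.erase i).erase m0, b i m * t m|
        ≤ |(∑ m, b i m * t m) - b i m0 * t m0|
          + |∑ m ∈ (Finset.univ.erase i).erase m0, b i m * t m| := abs_sub _ _
      _ ≤ (|∑ m, b i m * t m| + |b i m0 * t m0|)
          + |∑ m ∈ (Finset.univ.erase i).erase m0, b i m * t m| :=
            add_le_add_left (abs_sub _ _) _
      _ ≤ β + 2*β + (k:ℝ) * (4*(β*β)) := by
            refine add_le_add (add_le_add hv hm0term) hE
  have habs : |t i| * b i i = |b i i * t i| := by
    rw [abs_mul, abs_of_pos (by linarith [(hA i).1] : (0:ℝ) < b i i), mul_comm]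
  have hM : |t i| ≤ (31/10) * β := by
    nlinarith [abs_nonneg (t i), mul_le_mul_of_nonneg_left hβk (by linarith : (0:ℝ) ≤ 4*β),
      mul_le_mul_of_nonneg_left (hA i).1 (abs_nonneg (t i))]
  have hsq : t i ^ 2 ≤ ((31/10) * β)^2 := by
    rw [← sq_abs]
    exact pow_le_pow_left₀ (abs_nonneg _) hM 2
  nlinarith [mul_nonneg (sq_nonneg β) (by nlinarith : (0:ℝ) ≤ (k:ℝ)^2 - 4)]

theorem stmt13 :
    ∃ c : ℝ, 0 < c ∧ ∀ (d k : ℕ), 2 ≤ k → ∀ (w : Fin k → EuclideanSpace ℝ (Fin d))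
      (v : EuclideanSpace ℝ (Fin d)) (β : ℝ)
      -- `e` is the Gram–Schmidt orthonormalization of the normalized `w`'s, i.e. the unique
      -- orthonormal family with a triangular representation having positive diagonal
      (e : Fin k → EuclideanSpace ℝ (Fin d)) (a : Fin k → Fin k → ℝ),
      (∀ i, w i ≠ 0) → ‖v‖ = 1 →
      0 ≤ β → β ≤ c / (k : ℝ) ^ ((3 : ℝ) / 2) →
      (∀ i j : Fin k, i ≠ j → |⟪‖w i‖⁻¹ • w i, ‖w j‖⁻¹ • w j⟫| ≤ β) →
      -- `v` has small inner product with every normalized bin except possibly bin `k-1`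
      (∀ j : Fin k, (j : ℕ) ≠ k - 2 → |⟪v, ‖w j‖⁻¹ • w j⟫| ≤ β) →
      Orthonormal ℝ e →
      (∀ i : Fin k, ‖w i‖⁻¹ • w i = ∑ j ∈ Finset.univ.filter (· ≤ i), a i j • e j) →
      (∀ i : Fin k, 0 < a i i) →
      ∀ i : Fin k, (i : ℕ) = k - 1 → ⟪v, e i⟫ ^ 2 ≤ 4 * β ^ 2 * (k : ℝ) ^ 2 := by
  refine ⟨1/100, by norm_num, ?_⟩
  intro d k hk w v β e a h1 h2 hβ0 h4 h5 h6 he hw h9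
  have hk1 : (1:ℝ) ≤ (k:ℝ) := by exact_mod_cast Nat.one_le_of_lt hk
  have hkpos : (0:ℝ) < (k:ℝ) := by linarith
  -- numeric fact : β * k ≤ 1/100
  have hβk : β * (k:ℝ) ≤ 1/100 := by
    have hrp : (0:ℝ) < (k:ℝ) ^ ((3:ℝ)/2) := Real.rpow_pos_of_pos hkpos _
    have h1k : (k:ℝ) ≤ (k:ℝ) ^ ((3:ℝ)/2) := by
      calc (k:ℝ) = (k:ℝ) ^ (1:ℝ) := (Real.rpow_one _).symm
        _ ≤ (k:ℝ) ^ ((3:ℝ)/2) :=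
            Real.rpow_le_rpow_of_exponent_le hk1 (by norm_num)
    calc β * (k:ℝ) ≤ β * ((k:ℝ) ^ ((3:ℝ)/2)) := by
          exact mul_le_mul_of_nonneg_left h1k hβ0
      _ ≤ (1/100 / (k:ℝ) ^ ((3:ℝ)/2)) * ((k:ℝ) ^ ((3:ℝ)/2)) :=
          mul_le_mul_of_nonneg_right h4 hrp.le
      _ = 1/100 := div_mul_cancel₀ _ hrp.ne'
  -- the coefficient matrix and the coordinates of v
  set b : Fin k → Fin k → ℝ := fun i j => ⟪‖w i‖⁻¹ • w i, e j⟫ with hbdef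
  set t : Fin k → ℝ := fun m => ⟪v, e m⟫ with htdef
  have hnorm : ∀ i, ‖‖w i‖⁻¹ • w i‖ = 1 := by
    intro i
    rw [norm_smul, norm_inv, norm_norm, inv_mul_cancel₀ (norm_ne_zero_iff.mpr (h1 i))]
  have hb : ∀ i j, b i j = if j ≤ i then a i j else 0 := by
    intro i j
    show ⟪‖w i‖⁻¹ • w i, e j⟫ = _
    rw [hw i, sum_inner]
    simp only [real_inner_smul_left, orthonormal_iff_ite.mp he]
    simp [Finset.sum_ite_eq', Finset.mem_filter]
  have hkey : ∀ (x : EuclideanSpace ℝ (Fin d)) (i : Fin k),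
      ⟪x, ‖w i‖⁻¹ • w i⟫ = ∑ m, b i m * ⟪x, e m⟫ := by
    intro x i
    rw [hw i, inner_sum]
    simp only [real_inner_smul_right, hb, ite_mul, zero_mul]
    rw [Finset.sum_filter]
  have hb0 : ∀ i j : Fin k, i < j → b i j = 0 := by
    intro i j hij
    rw [hb, if_neg (not_le.mpr hij)]
  have hbd : ∀ j : Fin k, 0 < b j j := by
    intro j
    rw [hb, if_pos le_rfl]
    exact h9 j
  have hS : ∀ i : Fin k, ∑ m, b i m * b i m = 1 := by
    intro i
    have h := hkey (‖w i‖⁻¹ • w i) i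
    have hn : ⟪‖w i‖⁻¹ • w i, ‖w i‖⁻¹ • w i⟫ = 1 := by
      rw [real_inner_self_eq_norm_sq, hnorm i]; norm_num
    rw [hn] at h
    exact h.symm
  have hip : ∀ i j : Fin k, i ≠ j → |∑ m, b i m * b j m| ≤ β := by
    intro i j hij
    have h := hkey (‖w j‖⁻¹ • w j) i
    rw [← h]
    exact h5 j i (Ne.symm hij)
  have hvt : ∀ j : Fin k, (j:ℕ) ≠ k - 2 → |∑ m, b j m * t m| ≤ β := by
    intro j hj
    have h := hkey v j
    rw [← h]
    exact h6 j hj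
  have ht1 : ∀ m, |t m| ≤ 1 := by
    intro m
    calc |t m| ≤ ‖v‖ * ‖e m‖ := abs_real_inner_le_norm _ _
      _ = 1 := by rw [h2, he.1 m]; norm_num
  have hA := auxA13 hk β hβ0 hβk b hb0 hbd hS hip
  exact auxB13 hk β hβ0 hβk b t hb0 hA ht1 hvt
end

section
/- Let A_1,…,A_i ∈ ℝ^d be linearly independent vectors and let e_1,…,e_i be their Gram–Schmidt orthonormalization, so that A_r = ∑_{j=1}^r a_{r,j} e_j with a_{r,r} > 0 for every r ≤ i. Fix a sign g ∈ {−1,1} and let ē be the unit vector in the direction of the component of A_{i−1} + g·A_i orthogonal to span(e_1,…,e_{i−2}). Then for any further vectors A_{i+1},…,A_n ∈ ℝ^d, the sum over all j ∈ [n] of the squared norms of the orthogonal projections of A_j onto span(e_1,…,e_i), minus the corresponding sum of squared projections onto span(e_1,…,e_{i−2}, ē), is at least 2·a_{i,i}²·a_{i−1,i−1}² / ((a_{i−1,i−1} + g·a_{i,i−1})² + a_{i,i}²), which is strictly positive. In particular, hashing A_{i−1} and A_i to distinct bins captures strictly more total squared projection mass than merging them into one bin. -/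
open scoped RealInnerProductSpace

lemma key_mem_orthogonal_span {dd : ℕ} (s : Set (EuclideanSpace ℝ (Fin dd)))
    (w : EuclideanSpace ℝ (Fin dd)) (h : ∀ x ∈ s, ⟪x, w⟫ = 0) :
    w ∈ (Submodule.span ℝ s)ᗮ := by
  rw [Submodule.mem_orthogonal]
  intro z hz
  induction hz using Submodule.span_induction with
  | mem x hx => exact h x hx
  | zero => simp
  | add x y _ _ hx hy => simp [inner_add_left, hx, hy]
  | smul c x _ hx => simp [inner_smul_left, hx]

lemma key_proj_ineq {dd : ℕ} (K1 K2 : Submodule ℝ (EuclideanSpace ℝ (Fin dd)))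
    (h : K2 ≤ K1) (f x : EuclideanSpace ℝ (Fin dd))
    (hf1 : f ∈ K1) (hf2 : f ∈ K2ᗮ) (hfn : ‖f‖ = 1) :
    ⟪x, f⟫ ^ 2 ≤
      ‖(Submodule.orthogonalProjectionOnto K1 x : EuclideanSpace ℝ (Fin dd))‖ ^ 2 -
      ‖(Submodule.orthogonalProjectionOnto K2 x : EuclideanSpace ℝ (Fin dd))‖ ^ 2 := by
  set p1 : EuclideanSpace ℝ (Fin dd) := ↑(Submodule.orthogonalProjectionOnto K1 x) with hp1
  set p2 : EuclideanSpace ℝ (Fin dd) := ↑(Submodule.orthogonalProjectionOnto K2 x) with hp2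
  have h1 : x - p1 ∈ K1ᗮ := Submodule.sub_starProjection_mem_orthogonal (K := K1) x
  have h2 : x - p2 ∈ K2ᗮ := Submodule.sub_starProjection_mem_orthogonal (K := K2) x
  have hp2K : p2 ∈ K2 := SetLike.coe_mem _
  have hip : ⟪p1, p2⟫ = ‖p2‖ ^ 2 := by
    have hz1 : ⟪x - p1, p2⟫ = 0 := by
      have := (Submodule.mem_orthogonal _ _).1 (Submodule.orthogonal_le h h1) p2 hp2K
      rwa [real_inner_comm] at this
    have hz2 : ⟪x - p2, p2⟫ = 0 := by
      have := (Submodule.mem_orthogonal _ _).1 h2 p2 hp2K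
      rwa [real_inner_comm] at this
    have e1 : ⟪p1, p2⟫ = ⟪x, p2⟫ - ⟪x - p1, p2⟫ := by
      rw [inner_sub_left]; ring
    have e2 : ⟪x, p2⟫ = ⟪p2, p2⟫ + ⟪x - p2, p2⟫ := by
      rw [inner_sub_left]; ring
    rw [e1, hz1, e2, hz2, real_inner_self_eq_norm_sq]; ring
  have hif : ⟪p1 - p2, f⟫ = ⟪x, f⟫ := by
    have hz1 : ⟪x - p1, f⟫ = 0 := (Submodule.mem_orthogonal' _ _).1 h1 f hf1
    have hz2 : ⟪p2, f⟫ = 0 := (Submodule.mem_orthogonal _ _).1 hf2 p2 hp2K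
    rw [inner_sub_left, hz2]
    have : ⟪x, f⟫ - ⟪p1, f⟫ = 0 := by rw [← inner_sub_left]; exact hz1
    linarith
  have hns : ‖p1 - p2‖ ^ 2 = ‖p1‖ ^ 2 - ‖p2‖ ^ 2 := by
    rw [norm_sub_sq_real, hip]; ring
  have hcs := real_inner_mul_inner_self_le (p1 - p2) f
  rw [real_inner_self_eq_norm_sq, real_inner_self_eq_norm_sq, hfn] at hcs
  calc ⟪x, f⟫ ^ 2 = ⟪p1 - p2, f⟫ * ⟪p1 - p2, f⟫ := by rw [hif]; ring
    _ ≤ ‖p1 - p2‖ ^ 2 * 1 ^ 2 := by nlinarith [hcs]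
    _ = ‖p1‖ ^ 2 - ‖p2‖ ^ 2 := by rw [hns]; ring

set_option maxHeartbeats 1000000 in
theorem stmt15 {dd n : ℕ} (i : ℕ) (hi : 2 ≤ i) (hin : i ≤ n)
    (A : Fin n → EuclideanSpace ℝ (Fin dd))
    -- the first `i` vectors are linearly independent
    (hli : LinearIndependent ℝ (fun r : Fin i => A (Fin.castLE hin r)))
    -- `e` is their Gram–Schmidt orthonormalization, with coefficients `a r j` and
    -- positive diagonal
    (e : Fin i → EuclideanSpace ℝ (Fin dd))
    (he : Orthonormal ℝ e)
    (a : Fin i → Fin i → ℝ)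
    (hrep : ∀ r : Fin i,
      A (Fin.castLE hin r) = ∑ j ∈ Finset.univ.filter (· ≤ r), a r j • e j)
    (hpos : ∀ r : Fin i, 0 < a r r)
    (g : ℝ) (hg : g = 1 ∨ g = -1) :
    let i1 : Fin i := ⟨i - 2, by omega⟩
    let i2 : Fin i := ⟨i - 1, by omega⟩
    let E0 : Submodule ℝ (EuclideanSpace ℝ (Fin dd)) :=
      Submodule.span ℝ (e '' {j : Fin i | (j : ℕ) < i - 2})
    let v := A (Fin.castLE hin i1) + g • A (Fin.castLE hin i2)
    let comp := v - (Submodule.orthogonalProjectionOnto E0 v : EuclideanSpace ℝ (Fin dd))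
    let ebar := ‖comp‖⁻¹ • comp
    let E1 := Submodule.span ℝ (Set.range e)
    let E2 := E0 ⊔ Submodule.span ℝ {ebar}
    0 < 2 * (a i2 i2) ^ 2 * (a i1 i1) ^ 2 / ((a i1 i1 + g * a i2 i1) ^ 2 + (a i2 i2) ^ 2) ∧
    (∑ j : Fin n, ‖(Submodule.orthogonalProjectionOnto E1 (A j) : EuclideanSpace ℝ (Fin dd))‖ ^ 2)
        - (∑ j : Fin n, ‖(Submodule.orthogonalProjectionOnto E2 (A j) : EuclideanSpace ℝ (Fin dd))‖ ^ 2)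
      ≥ 2 * (a i2 i2) ^ 2 * (a i1 i1) ^ 2 / ((a i1 i1 + g * a i2 i1) ^ 2 + (a i2 i2) ^ 2) := by
  intro i1 i2 E0 v comp ebar E1 E2
  have hvdef : v = A (Fin.castLE hin i1) + g • A (Fin.castLE hin i2) := rfl
  have hcompdef : comp = v - (Submodule.orthogonalProjectionOnto E0 v : EuclideanSpace ℝ (Fin dd)) := rfl
  have hebardef : ebar = ‖comp‖⁻¹ • comp := rfl
  have hE2def : E2 = E0 ⊔ Submodule.span ℝ {ebar} := rfl
  have hg2 : g ^ 2 = 1 := by rcases hg with rfl | rfl <;> norm_num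
  have hgne : g ≠ 0 := by rcases hg with rfl | rfl <;> norm_num
  have hne12 : i1 ≠ i2 := by
    simp only [i1, i2, Fin.ne_iff_vne]
    omega
  have hee : ∀ j k : Fin i, ⟪e j, e k⟫ = if j = k then 1 else 0 := orthonormal_iff_ite.mp he
  set α : ℝ := a i1 i1 + g * a i2 i1 with hα
  set β : ℝ := g * a i2 i2 with hβ
  set w : EuclideanSpace ℝ (Fin dd) := α • e i1 + β • e i2 with hw
  set u : EuclideanSpace ℝ (Fin dd) := (-β) • e i1 + α • e i2 with hu
  have hβne : β ≠ 0 := mul_ne_zero hgne (hpos i2).ne'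
  have hwn2 : ‖w‖ ^ 2 = α ^ 2 + β ^ 2 := by
    rw [← real_inner_self_eq_norm_sq, hw]
    simp only [inner_add_left, inner_add_right, real_inner_smul_left, real_inner_smul_right, hee]
    simp only [if_true, if_neg hne12, if_neg (Ne.symm hne12)]
    ring
  have hun2 : ‖u‖ ^ 2 = α ^ 2 + β ^ 2 := by
    rw [← real_inner_self_eq_norm_sq, hu]
    simp only [inner_add_left, inner_add_right, real_inner_smul_left, real_inner_smul_right, hee]
    simp only [if_true, if_neg hne12, if_neg (Ne.symm hne12)]
    ring
  have hwpos : 0 < ‖w‖ ^ 2 := by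
    rw [hwn2]
    have hb2 : 0 < β ^ 2 := by positivity
    nlinarith [sq_nonneg α]
  have hwne : ‖w‖ ≠ 0 := by
    intro h0
    rw [h0] at hwpos; simp at hwpos
  -- decompose A i1 and A i2
  have hA1 : A (Fin.castLE hin i1) = (∑ j ∈ Finset.Iio i1, a i1 j • e j) + a i1 i1 • e i1 := by
    rw [hrep i1]
    have hfe : Finset.univ.filter (· ≤ i1) = insert i1 (Finset.Iio i1) := by
      ext j
      have hj := j.isLt
      simp only [Finset.mem_filter, Finset.mem_univ, true_and, Finset.mem_insert,
        Finset.mem_Iio, Fin.le_def, Fin.lt_def, Fin.ext_iff, i1]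
      omega
    rw [hfe, Finset.sum_insert (by simp)]
    exact add_comm _ _
  have hA2 : A (Fin.castLE hin i2) =
      ((∑ j ∈ Finset.Iio i1, a i2 j • e j) + a i2 i1 • e i1) + a i2 i2 • e i2 := by
    rw [hrep i2]
    have hfe : Finset.univ.filter (· ≤ i2) = insert i2 (insert i1 (Finset.Iio i1)) := by
      ext j
      have hj := j.isLt
      simp only [Finset.mem_filter, Finset.mem_univ, true_and, Finset.mem_insert,
        Finset.mem_Iio, Fin.le_def, Fin.lt_def, Fin.ext_iff, i1, i2]
      omega
    have h2ni : i2 ∉ insert i1 (Finset.Iio i1) := by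
      simp only [Finset.mem_insert, Finset.mem_Iio, Fin.lt_def, Fin.ext_iff, i1, i2]
      omega
    rw [hfe, Finset.sum_insert h2ni, Finset.sum_insert (by simp)]
    module
  have hE0mem : ∀ j ∈ Finset.Iio i1, e j ∈ E0 := by
    intro j hj
    exact Submodule.subset_span ⟨j, by simpa [Fin.lt_def, i1] using hj, rfl⟩
  have hsum0 : ∀ c : Fin i → ℝ, (∑ j ∈ Finset.Iio i1, c j • e j) ∈ E0 :=
    fun c => Submodule.sum_mem _ fun j hj => Submodule.smul_mem _ _ (hE0mem j hj)
  have hgen : ∀ x ∈ e '' {j : Fin i | (j : ℕ) < i - 2}, ∀ y z : ℝ,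
      ⟪x, y • e i1 + z • e i2⟫ = 0 := by
    rintro x ⟨j, hj, rfl⟩ y z
    have hj1 : j ≠ i1 := by
      simp only [Fin.ne_iff_vne, i1]; simp only [Set.mem_setOf_eq] at hj; omega
    have hj2 : j ≠ i2 := by
      simp only [Fin.ne_iff_vne, i2]; simp only [Set.mem_setOf_eq] at hj; omega
    simp only [inner_add_right, real_inner_smul_right, hee]
    rw [if_neg hj1, if_neg hj2]
    ring
  have hworth : w ∈ E0ᗮ := key_mem_orthogonal_span _ _ fun x hx => hgen x hx α β
  have huorth : u ∈ E0ᗮ := key_mem_orthogonal_span _ _ fun x hx => hgen x hx (-β) α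
  -- comp = w
  have hvwmem : v - w ∈ E0 := by
    have hvw : v - w = (∑ j ∈ Finset.Iio i1, a i1 j • e j) +
        g • (∑ j ∈ Finset.Iio i1, a i2 j • e j) := by
      rw [hvdef, hA1, hA2, hw, hα, hβ]
      module
    rw [hvw]
    exact Submodule.add_mem _ (hsum0 _) (Submodule.smul_mem _ _ (hsum0 _))
  have hproj : (Submodule.orthogonalProjectionOnto E0 v : EuclideanSpace ℝ (Fin dd)) = v - w := by
    apply Submodule.eq_starProjection_of_mem_orthogonal hvwmem
    simpa using hworth
  have hcomp : comp = w := by rw [hcompdef, hproj]; abel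
  have hwu : ⟪w, u⟫ = 0 := by
    rw [hw, hu]
    simp only [inner_add_left, inner_add_right, real_inner_smul_left, real_inner_smul_right, hee]
    simp only [if_true, if_neg hne12, if_neg (Ne.symm hne12)]
    ring
  -- the unit vector f spanning the difference
  set f : EuclideanSpace ℝ (Fin dd) := ‖w‖⁻¹ • u with hf
  have hunorm : ‖u‖ = ‖w‖ := by
    nlinarith [norm_nonneg u, norm_nonneg w, hwn2, hun2]
  have hfn : ‖f‖ = 1 := by
    rw [hf, norm_smul, norm_inv, norm_norm, hunorm, inv_mul_cancel₀ hwne]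
  have hE0leE1 : E0 ≤ E1 := Submodule.span_mono (Set.image_subset_range _ _)
  have heE1 : ∀ j : Fin i, e j ∈ E1 := fun j => Submodule.subset_span ⟨j, rfl⟩
  have huE1 : u ∈ E1 := Submodule.add_mem _
    (Submodule.smul_mem _ _ (heE1 i1)) (Submodule.smul_mem _ _ (heE1 i2))
  have hwE1 : w ∈ E1 := Submodule.add_mem _
    (Submodule.smul_mem _ _ (heE1 i1)) (Submodule.smul_mem _ _ (heE1 i2))
  have hf1 : f ∈ E1 := Submodule.smul_mem _ _ huE1
  have hebarw : ebar = ‖w‖⁻¹ • w := by rw [hebardef, hcomp]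
  have hE2le : E2 ≤ E1 := by
    rw [hE2def]
    refine sup_le hE0leE1 ?_
    rw [Submodule.span_le, Set.singleton_subset_iff]
    rw [hebarw]
    exact Submodule.smul_mem _ _ hwE1
  have hf2 : f ∈ E2ᗮ := by
    rw [hE2def, Submodule.mem_orthogonal]
    intro z hz
    rcases Submodule.mem_sup.1 hz with ⟨y, hy, z', hz', rfl⟩
    rcases Submodule.mem_span_singleton.1 hz' with ⟨c, rfl⟩
    have hy0 : ⟪y, f⟫ = 0 := by
      rw [hf, real_inner_smul_right, (Submodule.mem_orthogonal _ _).1 huorth y hy, mul_zero]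
    have hb0 : ⟪ebar, f⟫ = 0 := by
      rw [hebarw, hf, real_inner_smul_right, real_inner_smul_left, hwu]
      ring
    rw [inner_add_left, hy0, real_inner_smul_left, hb0]
    ring
  -- inner products of the A's with u
  have heu1 : ⟪e i1, u⟫ = -β := by
    rw [hu]
    simp only [inner_add_right, real_inner_smul_right, hee]
    simp only [if_true, if_neg hne12]
    ring
  have heu2 : ⟪e i2, u⟫ = α := by
    rw [hu]
    simp only [inner_add_right, real_inner_smul_right, hee]
    simp only [if_true, if_neg (Ne.symm hne12)]
    ring
  have hS0 : ∀ c : Fin i → ℝ, ⟪∑ j ∈ Finset.Iio i1, c j • e j, u⟫ = 0 :=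
    fun c => (Submodule.mem_orthogonal _ _).1 huorth _ (hsum0 c)
  have hx1 : ⟪A (Fin.castLE hin i1), u⟫ = -β * a i1 i1 := by
    rw [hA1, inner_add_left, hS0, real_inner_smul_left, heu1]
    ring
  have hx2 : ⟪A (Fin.castLE hin i2), u⟫ = -β * a i2 i1 + α * a i2 i2 := by
    rw [hA2, inner_add_left, inner_add_left, hS0, real_inner_smul_left, real_inner_smul_left,
      heu1, heu2]
    ring
  -- positivity of the bound
  have hi1pos := hpos i1
  have hi2pos := hpos i2
  have hDpos : 0 < α ^ 2 + (a i2 i2) ^ 2 :=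
    add_pos_of_nonneg_of_pos (sq_nonneg _) (pow_pos hi2pos 2)
  constructor
  · exact div_pos (by positivity) hDpos
  -- the main inequality
  have hterm : ∀ j : Fin n, ⟪A j, f⟫ ^ 2 ≤
      ‖(Submodule.orthogonalProjectionOnto E1 (A j) : EuclideanSpace ℝ (Fin dd))‖ ^ 2 -
      ‖(Submodule.orthogonalProjectionOnto E2 (A j) : EuclideanSpace ℝ (Fin dd))‖ ^ 2 :=
    fun j => key_proj_ineq E1 E2 hE2le f (A j) hf1 hf2 hfn
  have hnn : ∀ j : Fin n, 0 ≤
      ‖(Submodule.orthogonalProjectionOnto E1 (A j) : EuclideanSpace ℝ (Fin dd))‖ ^ 2 -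
      ‖(Submodule.orthogonalProjectionOnto E2 (A j) : EuclideanSpace ℝ (Fin dd))‖ ^ 2 :=
    fun j => le_trans (sq_nonneg _) (hterm j)
  rw [ge_iff_le, ← Finset.sum_sub_distrib]
  set j1 : Fin n := Fin.castLE hin i1 with hj1
  set j2 : Fin n := Fin.castLE hin i2 with hj2
  have hj12 : j1 ≠ j2 := by
    simp only [hj1, hj2, Fin.ne_iff_vne, Fin.coe_castLE, i1, i2]
    omega
  have hif1 : ⟪A j1, f⟫ = ‖w‖⁻¹ * (-β * a i1 i1) := by
    rw [hf, real_inner_smul_right, hx1]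
  have hif2 : ⟪A j2, f⟫ = ‖w‖⁻¹ * (-β * a i2 i1 + α * a i2 i2) := by
    rw [hf, real_inner_smul_right, hx2]
  have hw2D : ‖w‖ ^ 2 = α ^ 2 + (a i2 i2) ^ 2 := by
    rw [hwn2, hβ]
    linear_combination (a i2 i2) ^ 2 * hg2
  have hin2 : (‖w‖⁻¹) ^ 2 = (α ^ 2 + (a i2 i2) ^ 2)⁻¹ := by
    rw [← hw2D, inv_pow]
  have hbound : 2 * (a i2 i2) ^ 2 * (a i1 i1) ^ 2 /
      (α ^ 2 + (a i2 i2) ^ 2) = ⟪A j1, f⟫ ^ 2 + ⟪A j2, f⟫ ^ 2 := by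
    rw [hif1, hif2]
    rw [show (‖w‖⁻¹ * (-β * a i1 i1)) ^ 2 + (‖w‖⁻¹ * (-β * a i2 i1 + α * a i2 i2)) ^ 2
        = (‖w‖⁻¹) ^ 2 * ((-β * a i1 i1) ^ 2 + (-β * a i2 i1 + α * a i2 i2) ^ 2) from by ring]
    rw [hin2, inv_mul_eq_div, div_eq_div_iff hDpos.ne' hDpos.ne', hα, hβ]
    linear_combination (-(a i1 i1) ^ 2 * (a i2 i2) ^ 2 *
      ((a i1 i1 + g * a i2 i1) ^ 2 + (a i2 i2) ^ 2)) * hg2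
  rw [hbound]
  calc ⟪A j1, f⟫ ^ 2 + ⟪A j2, f⟫ ^ 2
      ≤ (‖(Submodule.orthogonalProjectionOnto E1 (A j1) : EuclideanSpace ℝ (Fin dd))‖ ^ 2 -
          ‖(Submodule.orthogonalProjectionOnto E2 (A j1) : EuclideanSpace ℝ (Fin dd))‖ ^ 2) +
        (‖(Submodule.orthogonalProjectionOnto E1 (A j2) : EuclideanSpace ℝ (Fin dd))‖ ^ 2 -
          ‖(Submodule.orthogonalProjectionOnto E2 (A j2) : EuclideanSpace ℝ (Fin dd))‖ ^ 2) :=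
        add_le_add (hterm j1) (hterm j2)
    _ = ∑ j ∈ ({j1, j2} : Finset (Fin n)),
        (‖(Submodule.orthogonalProjectionOnto E1 (A j) : EuclideanSpace ℝ (Fin dd))‖ ^ 2 -
         ‖(Submodule.orthogonalProjectionOnto E2 (A j) : EuclideanSpace ℝ (Fin dd))‖ ^ 2) :=
        by rw [Finset.sum_pair hj12]
    _ ≤ ∑ j : Fin n,
        (‖(Submodule.orthogonalProjectionOnto E1 (A j) : EuclideanSpace ℝ (Fin dd))‖ ^ 2 -
         ‖(Submodule.orthogonalProjectionOnto E2 (A j) : EuclideanSpace ℝ (Fin dd))‖ ^ 2) :=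
        Finset.sum_le_sum_of_subset_of_nonneg (Finset.subset_univ _) fun j _ _ => hnn j
end

section
/- Let v_1,…,v_c ∈ ℝ^d be pairwise orthogonal nonzero vectors with ‖v_1‖ ≥ ‖v_i‖ for all i ≤ c, let g_1,…,g_c ∈ {−1,1}, and let w = ∑_{i=1}^c g_i v_i. Then the sum of the squared norms of the orthogonal projections of v_1,…,v_c onto the line spanned by w equals (∑_{i=1}^c ‖v_i‖⁴) / (∑_{j=1}^c ‖v_j‖²), which is at most ‖v_1‖². Consequently, the total squared distance of v_1,…,v_c from the line spanned by w is at least ‖v_2‖² + ⋯ + ‖v_c‖². -/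
open scoped RealInnerProductSpace

theorem stmt16 {d c : ℕ} (hc : 0 < c)
    (v : Fin c → EuclideanSpace ℝ (Fin d))
    (hv0 : ∀ i, v i ≠ 0)
    (horth : ∀ i j : Fin c, i ≠ j → ⟪v i, v j⟫ = 0)
    (hmax : ∀ i, ‖v i‖ ≤ ‖v ⟨0, hc⟩‖)
    (g : Fin c → ℝ) (hg : ∀ i, g i = 1 ∨ g i = -1) :
    let w := ∑ i, g i • v i
    let L := Submodule.span ℝ ({w} : Set (EuclideanSpace ℝ (Fin d)))
    ((∑ i, ‖(Submodule.orthogonalProjection L (v i) : EuclideanSpace ℝ (Fin d))‖ ^ 2)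
        = (∑ i, ‖v i‖ ^ 4) / (∑ j, ‖v j‖ ^ 2)) ∧
    ((∑ i, ‖v i‖ ^ 4) / (∑ j, ‖v j‖ ^ 2) ≤ ‖v ⟨0, hc⟩‖ ^ 2) ∧
    ((∑ i, ‖v i - (Submodule.orthogonalProjection L (v i) : EuclideanSpace ℝ (Fin d))‖ ^ 2)
        ≥ ∑ i ∈ Finset.univ.filter (fun i : Fin c => i ≠ ⟨0, hc⟩), ‖v i‖ ^ 2) := by
  intro w L
  haveI : Nonempty (Fin c) := ⟨⟨0, hc⟩⟩
  have hg2 : ∀ i, g i ^ 2 = 1 := fun i => by rcases hg i with h | h <;> simp [h]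
  have hnv : ∀ i, (0:ℝ) < ‖v i‖ ^ 2 := fun i =>
    pow_pos (norm_pos_iff.mpr (hv0 i)) 2
  have hS : (0:ℝ) < ∑ j, ‖v j‖ ^ 2 :=
    Finset.sum_pos (fun i _ => hnv i) Finset.univ_nonempty
  have hwv : ∀ i, ⟪w, v i⟫ = g i * ‖v i‖ ^ 2 := by
    intro i
    simp only [w, sum_inner, real_inner_smul_left]
    rw [Finset.sum_eq_single i]
    · rw [real_inner_self_eq_norm_sq]
    · intro j _ hj; rw [horth j i hj, mul_zero]
    · simp
  have hw2 : ‖w‖ ^ 2 = ∑ j, ‖v j‖ ^ 2 := by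
    rw [← real_inner_self_eq_norm_sq]
    simp only [w, inner_sum, real_inner_smul_right]
    refine Finset.sum_congr rfl fun i _ => ?_
    rw [show ⟪w, v i⟫ = g i * ‖v i‖ ^ 2 from hwv i]
    rcases hg i with h | h <;> simp [h]
  have hproj : ∀ i,
      (Submodule.orthogonalProjection L (v i) : EuclideanSpace ℝ (Fin d))
        = (g i * ‖v i‖ ^ 2 / ‖w‖ ^ 2) • w := by
    intro i
    have := Submodule.starProjection_singleton (𝕜 := ℝ) (v := w) (v i)
    rw [Submodule.starProjection_apply] at this
    rw [this, hwv i]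
    norm_num
  have hpn : ∀ i,
      ‖(Submodule.orthogonalProjection L (v i) : EuclideanSpace ℝ (Fin d))‖ ^ 2
        = ‖v i‖ ^ 4 / (∑ j, ‖v j‖ ^ 2) := by
    intro i
    rw [hproj i, norm_smul, mul_pow, Real.norm_eq_abs, sq_abs, hw2]
    have hS' : (∑ j, ‖v j‖ ^ 2) ≠ 0 := ne_of_gt hS
    field_simp
    ring_nf
    rw [hg2 i]
    ring
  have h1 : (∑ i, ‖(Submodule.orthogonalProjection L (v i) : EuclideanSpace ℝ (Fin d))‖ ^ 2)
      = (∑ i, ‖v i‖ ^ 4) / (∑ j, ‖v j‖ ^ 2) := by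
    rw [Finset.sum_div]
    exact Finset.sum_congr rfl fun i _ => hpn i
  have h2 : (∑ i, ‖v i‖ ^ 4) / (∑ j, ‖v j‖ ^ 2) ≤ ‖v ⟨0, hc⟩‖ ^ 2 := by
    rw [div_le_iff₀ hS]
    calc ∑ i, ‖v i‖ ^ 4 ≤ ∑ i, ‖v ⟨0, hc⟩‖ ^ 2 * ‖v i‖ ^ 2 := by
          refine Finset.sum_le_sum fun i _ => ?_
          have : ‖v i‖ ^ 4 = ‖v i‖ ^ 2 * ‖v i‖ ^ 2 := by ring
          rw [this]
          exact mul_le_mul_of_nonneg_right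
            (pow_le_pow_left₀ (norm_nonneg _) (hmax i) 2) (le_of_lt (hnv i))
      _ = ‖v ⟨0, hc⟩‖ ^ 2 * ∑ j, ‖v j‖ ^ 2 := by rw [Finset.mul_sum]
  refine ⟨h1, h2, ?_⟩
  have hpyth : ∀ i,
      ‖v i - (Submodule.orthogonalProjection L (v i) : EuclideanSpace ℝ (Fin d))‖ ^ 2
        = ‖v i‖ ^ 2 - ‖(Submodule.orthogonalProjection L (v i) : EuclideanSpace ℝ (Fin d))‖ ^ 2 := by
    intro i
    have horto : ⟪v i - (Submodule.orthogonalProjection L (v i) : EuclideanSpace ℝ (Fin d)),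
        (Submodule.orthogonalProjection L (v i) : EuclideanSpace ℝ (Fin d))⟫ = 0 :=
      by have := Submodule.starProjection_inner_eq_zero (K := L) (v i) _ (Submodule.coe_mem (Submodule.orthogonalProjection L (v i))); rwa [Submodule.starProjection_apply] at this
    have key := norm_add_sq_real (v i - (Submodule.orthogonalProjection L (v i) : EuclideanSpace ℝ (Fin d)))
      (Submodule.orthogonalProjection L (v i) : EuclideanSpace ℝ (Fin d))
    rw [sub_add_cancel, horto] at key
    linarith
  have hsum : (∑ i, ‖v i - (Submodule.orthogonalProjection L (v i) : EuclideanSpace ℝ (Fin d))‖ ^ 2)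
      = (∑ i, ‖v i‖ ^ 2) - (∑ i, ‖v i‖ ^ 4) / (∑ j, ‖v j‖ ^ 2) := by
    rw [← h1, ← Finset.sum_sub_distrib]
    exact Finset.sum_congr rfl fun i _ => hpyth i
  have hfil : (∑ i ∈ Finset.univ.filter (fun i : Fin c => i ≠ ⟨0, hc⟩), ‖v i‖ ^ 2)
      = (∑ i, ‖v i‖ ^ 2) - ‖v ⟨0, hc⟩‖ ^ 2 := by
    rw [Finset.filter_ne', Finset.sum_erase_eq_sub (Finset.mem_univ _)]
  rw [hsum, hfil]
  linarith
end

section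
/- Let v_1,…,v_c, u ∈ ℝ^d be pairwise orthogonal nonzero vectors, let g_0, g_1,…,g_c ∈ {−1,1}, and set W = ∑_{j=1}^c ‖v_j‖² and Q = ∑_{j=1}^c ‖v_j‖⁴. Then: (a) the sum of squared norms of the orthogonal projections of v_1,…,v_c, u onto the line spanned by g_0·u + ∑_{j=1}^c g_j v_j equals (Q + ‖u‖⁴)/(W + ‖u‖²); and (b) Q/W − (Q + ‖u‖⁴)/(W + ‖u‖²) = ‖u‖²·(Q/W − ‖u‖²)/(W + ‖u‖²) ≤ ‖u‖²·(W − ‖u‖²)/(W + ‖u‖²). In other words, merging u into a bin of orthogonal vectors v_1,…,v_c increases the total squared projection loss by exactly ‖u‖²·(Q/W − ‖u‖²)/(W + ‖u‖²), which is at most ‖u‖²·(W − ‖u‖²)/(W + ‖u‖²). -/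
open scoped RealInnerProductSpace

theorem stmt17 {d c : ℕ}
    (v : Fin c → EuclideanSpace ℝ (Fin d)) (u : EuclideanSpace ℝ (Fin d))
    (hv0 : ∀ i, v i ≠ 0) (hu0 : u ≠ 0)
    (horthv : ∀ i j : Fin c, i ≠ j → ⟪v i, v j⟫ = 0)
    (horthu : ∀ i, ⟪u, v i⟫ = 0)
    (g0 : ℝ) (hg0 : g0 = 1 ∨ g0 = -1)
    (g : Fin c → ℝ) (hg : ∀ i, g i = 1 ∨ g i = -1) :
    let W := ∑ j, ‖v j‖ ^ 2
    let Q := ∑ j, ‖v j‖ ^ 4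
    let L := Submodule.span ℝ
      ({g0 • u + ∑ j, g j • v j} : Set (EuclideanSpace ℝ (Fin d)))
    ((∑ j, ‖(L.orthogonalProjection (v j) : EuclideanSpace ℝ (Fin d))‖ ^ 2)
        + ‖(L.orthogonalProjection u : EuclideanSpace ℝ (Fin d))‖ ^ 2
        = (Q + ‖u‖ ^ 4) / (W + ‖u‖ ^ 2)) ∧
    (Q / W - (Q + ‖u‖ ^ 4) / (W + ‖u‖ ^ 2)
        = ‖u‖ ^ 2 * (Q / W - ‖u‖ ^ 2) / (W + ‖u‖ ^ 2)) ∧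
    (‖u‖ ^ 2 * (Q / W - ‖u‖ ^ 2) / (W + ‖u‖ ^ 2)
        ≤ ‖u‖ ^ 2 * (W - ‖u‖ ^ 2) / (W + ‖u‖ ^ 2)) := by
  intro W Q L
  set w : EuclideanSpace ℝ (Fin d) := g0 • u + ∑ j, g j • v j with hw
  have hg02 : g0 ^ 2 = 1 := by rcases hg0 with h | h <;> simp [h]
  have hg2 : ∀ i, g i ^ 2 = 1 := fun i => by rcases hg i with h | h <;> simp [h]
  have hu2pos : (0:ℝ) < ‖u‖ ^ 2 := by
    have : (0:ℝ) < ‖u‖ := norm_pos_iff.mpr hu0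
    positivity
  have hWnn : (0:ℝ) ≤ W := Finset.sum_nonneg fun i _ => by positivity
  -- inner products with w
  have hiu : ⟪w, u⟫ = g0 * ‖u‖ ^ 2 := by
    rw [hw, inner_add_left, real_inner_smul_left, sum_inner,
      real_inner_self_eq_norm_sq]
    have : ∀ j, ⟪g j • v j, u⟫ = (0:ℝ) := fun j => by
      rw [real_inner_smul_left, real_inner_comm, horthu j, mul_zero]
    simp [this]
  have hiv : ∀ i, ⟪w, v i⟫ = g i * ‖v i‖ ^ 2 := by
    intro i
    rw [hw, inner_add_left, real_inner_smul_left, horthu i, mul_zero, zero_add,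
      sum_inner]
    rw [Finset.sum_eq_single i]
    · rw [real_inner_smul_left, real_inner_self_eq_norm_sq]
    · intro j _ hj
      rw [real_inner_smul_left, horthv j i hj, mul_zero]
    · simp
  have hw2 : ‖w‖ ^ 2 = W + ‖u‖ ^ 2 := by
    rw [← real_inner_self_eq_norm_sq]
    nth_rewrite 1 [hw]
    rw [inner_add_left, real_inner_smul_left, real_inner_comm w u, hiu, sum_inner]
    have : ∀ j : Fin c, ⟪g j • v j, w⟫ = ‖v j‖ ^ 2 := fun j => by
      rw [real_inner_smul_left, real_inner_comm, hiv j, ← mul_assoc,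
        ← sq, hg2 j, one_mul]
    rw [Finset.sum_congr rfl fun j _ => this j]
    rw [← mul_assoc, ← sq, hg02, one_mul]
    ring
  have hwpos : (0:ℝ) < ‖w‖ ^ 2 := by rw [hw2]; linarith
  have hwne : W + ‖u‖ ^ 2 ≠ 0 := by linarith
  -- projection norm formula
  have hproj : ∀ x : EuclideanSpace ℝ (Fin d),
      ‖(L.orthogonalProjection x : EuclideanSpace ℝ (Fin d))‖ ^ 2
        = ⟪w, x⟫ ^ 2 / ‖w‖ ^ 2 := by
    intro x
    have hps : (L.orthogonalProjection x : EuclideanSpace ℝ (Fin d))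
        = (⟪w, x⟫ / ‖w‖ ^ 2) • w := Submodule.starProjection_singleton ℝ x
    rw [hps, norm_smul, mul_pow,
      Real.norm_eq_abs, sq_abs, div_pow]
    have h4 : (‖w‖ ^ 2) ^ 2 = ‖w‖ ^ 2 * ‖w‖ ^ 2 := sq (‖w‖ ^ 2)
    rw [h4, ← div_div, div_mul_eq_mul_div, mul_div_assoc,
      div_self (ne_of_gt hwpos), mul_one]
  -- Q/W * W = Q  (handles W = 0 case since then c = 0 so Q = 0)
  have hQW : Q / W * W = Q := by
    rcases eq_or_ne W 0 with h | h
    · have hQ0 : Q = 0 := by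
        have : ∀ j ∈ Finset.univ, ‖v j‖ ^ 2 = (0:ℝ) := by
          intro j _
          have := (Finset.sum_eq_zero_iff_of_nonneg
            (fun i _ => by positivity)).mp h j (Finset.mem_univ j)
          exact this
        have hvz : ∀ j : Fin c, v j = 0 := fun j => by
          have := this j (Finset.mem_univ j)
          have : ‖v j‖ = 0 := by nlinarith [norm_nonneg (v j)]
          simpa using this
        exact Finset.sum_eq_zero fun j _ => by rw [hvz j]; simp
      simp [h, hQ0]
    · exact div_mul_cancel₀ Q h
  have hQle : Q ≤ W ^ 2 := by
    have : ∑ j, (‖v j‖ ^ 2) ^ 2 ≤ (∑ j, ‖v j‖ ^ 2) ^ 2 :=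
      Finset.sum_sq_le_sq_sum_of_nonneg fun i _ => by positivity
    calc Q = ∑ j, (‖v j‖ ^ 2) ^ 2 := Finset.sum_congr rfl fun j _ => by ring
    _ ≤ W ^ 2 := this
  refine ⟨?_, ?_, ?_⟩
  · have : ∀ j : Fin c,
        ‖(L.orthogonalProjection (v j) : EuclideanSpace ℝ (Fin d))‖ ^ 2
          = ‖v j‖ ^ 4 / (W + ‖u‖ ^ 2) := fun j => by
      rw [hproj, hiv j, mul_pow, hg2 j, one_mul, hw2]; ring_nf
    rw [Finset.sum_congr rfl fun j _ => this j, hproj, hiu, mul_pow, hg02,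
      one_mul, hw2, ← Finset.sum_div]
    rw [← add_div]
    show (Q + (‖u‖ ^ 2) ^ 2) / (W + ‖u‖ ^ 2) = _
    ring_nf
  · set r := Q / W with hr
    have hQr : Q = r * W := hQW.symm
    rw [hQr]
    have h4 : ‖u‖ ^ 4 = ‖u‖ ^ 2 * ‖u‖ ^ 2 := by ring
    rw [h4]
    field_simp
    ring
  · have hQWle : Q / W ≤ W := by
      rcases eq_or_ne W 0 with h | h
      · have : Q ≤ 0 := by nlinarith
        have hQnn : (0:ℝ) ≤ Q := Finset.sum_nonneg fun i _ => by positivity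
        simp [h]
      · rw [div_le_iff₀ (lt_of_le_of_ne hWnn (Ne.symm h))]
        nlinarith
    apply div_le_div_of_nonneg_right ?_ (by linarith)
    · exact mul_le_mul_of_nonneg_left (by linarith) (le_of_lt hu2pos)
end

section
/- Fix integers h_k > 8 and h_n ≥ h_k + 1, and set n = ∑_{i=1}^{h_n} 2^{i+1} = 2^{h_n+2} − 4 and k = 2(2^{h_k+1} − 1). Let A ∈ ℝ^{n×d} (with d ≥ n) be a matrix whose rows are pairwise orthogonal and such that for each i ∈ {1,…,h_n} exactly 2^{i+1} rows have squared Euclidean norm n²/2^{2i}. Let S ∈ ℝ^{k×n} be a random CountSketch matrix: independently for each column of S, a uniformly random one of the k entries is set to a value in {−1,+1} (chosen uniformly) and all other entries are 0. Then the expectation over S of min over rank-≤k matrices X whose row space is contained in row(SA) of ‖X − A‖_F² is at least 1.095 · n² / 2^{h_k − 2}. -/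
open Matrix

/-- The CountSketch matrix determined by bucket positions `p` and signs `s`
(`true` meaning `+1` and `false` meaning `-1`). -/
def csMatrix {n k : ℕ} (p : Fin n → Fin k) (s : Fin n → Bool) :
    Matrix (Fin k) (Fin n) ℝ :=
  Matrix.of fun i j => if p j = i then (if s j then 1 else -1) else 0

noncomputable def rnsq {n d : ℕ} (A : Matrix (Fin n) (Fin d) ℝ) (r : Fin n) : ℝ :=
  ∑ l, (A r l) ^ 2

lemma rnsq_nonneg {n d : ℕ} (A : Matrix (Fin n) (Fin d) ℝ) (r : Fin n) : 0 ≤ rnsq A r := by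
  unfold rnsq; positivity

lemma inner_VV {n d k : ℕ} (A : Matrix (Fin n) (Fin d) ℝ)
    (horth : ∀ r s : Fin n, r ≠ s → ∑ l, A r l * A s l = 0)
    (p : Fin n → Fin k) (s : Fin n → Bool) (b b' : Fin k) :
    ∑ l, (csMatrix p s * A) b l * (csMatrix p s * A) b' l
      = if b = b' then ∑ r ∈ Finset.univ.filter (fun r => p r = b), rnsq A r else 0 := by
  classical
  have h1 : ∀ l, (csMatrix p s * A) b l * (csMatrix p s * A) b' l
      = ∑ r1, ∑ r2, (csMatrix p s b r1 * csMatrix p s b' r2) * (A r1 l * A r2 l) := by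
    intro l
    simp only [Matrix.mul_apply]
    rw [Finset.sum_mul_sum]
    refine Finset.sum_congr rfl fun r1 _ => Finset.sum_congr rfl fun r2 _ => by ring
  simp only [h1]
  rw [Finset.sum_comm]
  have h2 : ∀ r1 : Fin n, ∑ l, ∑ r2, (csMatrix p s b r1 * csMatrix p s b' r2) * (A r1 l * A r2 l)
      = (csMatrix p s b r1 * csMatrix p s b' r1) * rnsq A r1 := by
    intro r1
    rw [Finset.sum_comm]
    rw [Finset.sum_eq_single r1]
    · rw [← Finset.mul_sum]; unfold rnsq
      congr 1; refine Finset.sum_congr rfl fun l _ => by ring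
    · intro r2 _ hne
      rw [← Finset.mul_sum, horth r1 r2 (fun h => hne h.symm), mul_zero]
    · intro h; exact absurd (Finset.mem_univ r1) h
  simp only [h2]
  by_cases hbb : b = b'
  · subst hbb
    rw [if_pos rfl, Finset.sum_filter]
    refine Finset.sum_congr rfl fun r1 _ => ?_
    by_cases hp : p r1 = b
    · rw [if_pos hp]
      simp only [csMatrix, Matrix.of_apply, if_pos hp]
      cases s r1 <;> simp
    · rw [if_neg hp]
      simp only [csMatrix, Matrix.of_apply, if_neg hp]
      ring
  · rw [if_neg hbb]
    refine Finset.sum_eq_zero fun r1 _ => ?_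
    simp only [csMatrix, Matrix.of_apply]
    by_cases hp : p r1 = b
    · have : ¬ (p r1 = b') := fun h => hbb (hp ▸ h ▸ rfl)
      rw [if_neg this]; ring
    · rw [if_neg hp]; ring

lemma inner_VA {n d k : ℕ} (A : Matrix (Fin n) (Fin d) ℝ)
    (horth : ∀ r s : Fin n, r ≠ s → ∑ l, A r l * A s l = 0)
    (p : Fin n → Fin k) (s : Fin n → Bool) (b : Fin k) (r : Fin n) :
    ∑ l, (csMatrix p s * A) b l * A r l
      = if p r = b then (if s r then 1 else -1) * rnsq A r else 0 := by
  classical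
  have h1 : ∀ l, (csMatrix p s * A) b l * A r l
      = ∑ r1, csMatrix p s b r1 * (A r1 l * A r l) := by
    intro l
    simp only [Matrix.mul_apply]
    rw [Finset.sum_mul]
    refine Finset.sum_congr rfl fun r1 _ => by ring
  simp only [h1]
  rw [Finset.sum_comm]
  rw [Finset.sum_eq_single r]
  · rw [← Finset.mul_sum]
    simp only [csMatrix, Matrix.of_apply]
    unfold rnsq
    by_cases hp : p r = b
    · rw [if_pos hp, if_pos hp]
      congr 1
      refine Finset.sum_congr rfl fun l _ => by ring
    · rw [if_neg hp, if_neg hp, zero_mul]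
  · intro r1 _ hne
    rw [← Finset.mul_sum, horth r1 r hne, mul_zero]
  · intro h; exact absurd (Finset.mem_univ r) h

lemma rowErr {n d k : ℕ} (A : Matrix (Fin n) (Fin d) ℝ)
    (horth : ∀ r s : Fin n, r ≠ s → ∑ l, A r l * A s l = 0)
    (p : Fin n → Fin k) (s : Fin n → Bool) (r r' : Fin n) (hne : r' ≠ r)
    (hw : rnsq A r ≤ rnsq A r') (hp : p r' = p r)
    (x : Fin d → ℝ) (hx : x ∈ rowSpace (csMatrix p s * A)) :
    rnsq A r / 2 ≤ ∑ l, (x l - A r l) ^ 2 := by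
  classical
  obtain ⟨c, hc⟩ := (Submodule.mem_span_range_iff_exists_fun ℝ).mp hx
  set V : Matrix (Fin k) (Fin d) ℝ := csMatrix p s * A with hV
  set N : Fin k → ℝ := fun b => ∑ r1 ∈ Finset.univ.filter (fun r1 => p r1 = b), rnsq A r1 with hN
  have hNnn : ∀ b, 0 ≤ N b := fun b => Finset.sum_nonneg fun r1 _ => rnsq_nonneg A r1
  have hxl : ∀ l, x l = ∑ b, c b * V b l := by
    intro l
    rw [← hc, Finset.sum_apply]
    rfl
  have expand : ∑ l, (x l - A r l) ^ 2
      = (∑ l, x l ^ 2) - 2 * (∑ l, x l * A r l) + rnsq A r := by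
    unfold rnsq
    rw [Finset.mul_sum, ← Finset.sum_sub_distrib, ← Finset.sum_add_distrib]
    exact Finset.sum_congr rfl fun l _ => by ring
  have hx2 : ∑ l, x l ^ 2 = ∑ b, c b ^ 2 * N b := by
    have e1 : ∀ l, x l ^ 2 = ∑ b, ∑ b', (c b * c b') * (V b l * V b' l) := by
      intro l
      rw [hxl l, sq, Finset.sum_mul_sum]
      exact Finset.sum_congr rfl fun b _ => Finset.sum_congr rfl fun b' _ => by ring
    simp only [e1]
    rw [Finset.sum_comm]
    refine Finset.sum_congr rfl fun b _ => ?_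
    rw [Finset.sum_comm]
    have e2 : ∀ b' : Fin k, ∑ l, (c b * c b') * (V b l * V b' l)
        = (c b * c b') * ∑ l, V b l * V b' l := by
      intro b'; rw [← Finset.mul_sum]
    calc ∑ b', ∑ l, (c b * c b') * (V b l * V b' l)
        = ∑ b', (c b * c b') * ∑ l, V b l * V b' l := Finset.sum_congr rfl fun b' _ => e2 b'
      _ = ∑ b', (c b * c b') * (if b = b' then N b' else 0) := by
          refine Finset.sum_congr rfl fun b' _ => ?_
          rw [inner_VV A horth p s b b']
          by_cases h : b = b'
          · subst h; simp [hN]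
          · simp [h]
      _ = ∑ b', (if b = b' then (c b * c b') * N b' else 0) := by
          refine Finset.sum_congr rfl fun b' _ => ?_
          by_cases h : b = b' <;> simp [h]
      _ = c b ^ 2 * N b := by
          rw [Finset.sum_ite_eq]
          simp [sq]
  have hxa : ∑ l, x l * A r l = c (p r) * ((if s r then 1 else -1) * rnsq A r) := by
    have e1 : ∀ l, x l * A r l = ∑ b, c b * (V b l * A r l) := by
      intro l
      rw [hxl l, Finset.sum_mul]
      exact Finset.sum_congr rfl fun b _ => by ring
    simp only [e1]
    rw [Finset.sum_comm]
    calc ∑ b, ∑ l, c b * (V b l * A r l)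
        = ∑ b, c b * ∑ l, V b l * A r l := Finset.sum_congr rfl fun b _ => by
          rw [← Finset.mul_sum]
      _ = ∑ b, (if p r = b then c b * ((if s r then 1 else -1) * rnsq A r) else 0) := by
          refine Finset.sum_congr rfl fun b _ => ?_
          rw [inner_VA A horth p s b r]
          by_cases h : p r = b <;> simp [h]
      _ = c (p r) * ((if s r then 1 else -1) * rnsq A r) := by
          rw [Finset.sum_ite_eq]
          simp
  have hsingle : c (p r) ^ 2 * N (p r) ≤ ∑ b, c b ^ 2 * N b :=
    Finset.single_le_sum (f := fun b => c b ^ 2 * N b)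
      (fun b _ => mul_nonneg (sq_nonneg _) (hNnn b)) (Finset.mem_univ _)
  have hNge : rnsq A r + rnsq A r' ≤ N (p r) := by
    have hsub : ({r', r} : Finset (Fin n)) ⊆ Finset.univ.filter (fun r1 => p r1 = p r) := by
      intro a ha
      rcases Finset.mem_insert.mp ha with h | h
      · subst h; simp [hp]
      · rw [Finset.mem_singleton] at h; subst h; simp
    calc rnsq A r + rnsq A r' = ∑ a ∈ ({r', r} : Finset (Fin n)), rnsq A a := by
          rw [Finset.sum_pair hne]; ring
      _ ≤ N (p r) :=
          Finset.sum_le_sum_of_subset_of_nonneg hsub fun a _ _ => rnsq_nonneg A a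
  have hwr : 0 ≤ rnsq A r := rnsq_nonneg A r
  have h2w : 2 * rnsq A r ≤ N (p r) := by linarith
  rw [expand, hx2, hxa]
  set cp := c (p r)
  set w := rnsq A r
  have hcN : 2 * w * cp ^ 2 ≤ cp ^ 2 * N (p r) := by nlinarith [sq_nonneg cp]
  cases hs : s r
  · simp only [hs, Bool.false_eq_true, if_false]
    nlinarith [mul_nonneg hwr (sq_nonneg (cp + 1/2))]
  · simp only [hs, if_true]
    nlinarith [mul_nonneg hwr (sq_nonneg (cp - 1/2))]

open scoped Classical in
/-- per-sketch lower bound on the fit of any `X` with rows in `row(SA)` -/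
lemma frob_lower {n d k : ℕ} (A : Matrix (Fin n) (Fin d) ℝ)
    (horth : ∀ r s : Fin n, r ≠ s → ∑ l, A r l * A s l = 0)
    (p : Fin n → Fin k) (s : Fin n → Bool)
    (X : Matrix (Fin n) (Fin d) ℝ) (hX : rowSpace X ≤ rowSpace (csMatrix p s * A)) :
    ∑ r, (if ∃ r', r' ≠ r ∧ rnsq A r ≤ rnsq A r' ∧ p r' = p r
          then rnsq A r / 2 else 0) ≤ frobSq (X - A) := by
  unfold frobSq
  refine Finset.sum_le_sum fun r _ => ?_
  by_cases hcoll : ∃ r', r' ≠ r ∧ rnsq A r ≤ rnsq A r' ∧ p r' = p r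
  · rw [if_pos hcoll]
    obtain ⟨r', h1, h2, h3⟩ := hcoll
    have hxr : X r ∈ rowSpace (csMatrix p s * A) :=
      hX (Submodule.subset_span ⟨r, rfl⟩)
    have := rowErr A horth p s r r' h1 h2 h3 (X r) hxr
    simpa [Matrix.sub_apply] using this
  · rw [if_neg hcoll]
    positivity

/-- count of bucket assignments avoiding collisions of `T` with `r` -/
lemma count_avoid {n k : ℕ} (r : Fin n) (T : Finset (Fin n)) (hrT : r ∉ T) :
    (Finset.univ.filter (fun p : Fin n → Fin k => ∀ r' ∈ T, p r' ≠ p r)).card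
      = k * ((k - 1) ^ T.card * k ^ (n - 1 - T.card)) := by
  classical
  rw [Finset.card_eq_sum_card_fiberwise
    (f := fun p : Fin n → Fin k => p r) (t := Finset.univ) (fun x _ => Finset.mem_univ _)]
  have hfib : ∀ v : Fin k,
      ((Finset.univ.filter (fun p : Fin n → Fin k => ∀ r' ∈ T, p r' ≠ p r)).filter
        (fun p => p r = v)).card = (k - 1) ^ T.card * k ^ (n - 1 - T.card) := by
    intro v
    have hset : (Finset.univ.filter (fun p : Fin n → Fin k => ∀ r' ∈ T, p r' ≠ p r)).filter
          (fun p => p r = v)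
        = Fintype.piFinset (fun i : Fin n =>
            if i = r then {v} else if i ∈ T then {v}ᶜ else Finset.univ) := by
      ext q
      simp only [Finset.mem_filter, Fintype.mem_piFinset, Finset.mem_univ, true_and]
      constructor
      · rintro ⟨hall, hqr⟩ i
        by_cases hir : i = r
        · subst hir; simp [hqr]
        · rw [if_neg hir]
          by_cases hiT : i ∈ T
          · rw [if_pos hiT]
            simp only [Finset.mem_compl, Finset.mem_singleton]
            rw [← hqr]
            exact hall i hiT
          · rw [if_neg hiT]; exact Finset.mem_univ _
      · intro hall
        have hqr : q r = v := by
          have := hall r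
          rw [if_pos rfl] at this
          simpa using this
        refine ⟨fun r' hr' => ?_, hqr⟩
        have := hall r'
        rw [if_neg (ne_of_mem_of_not_mem hr' hrT), if_pos hr'] at this
        simp only [Finset.mem_compl, Finset.mem_singleton] at this
        rw [hqr]
        exact this
    rw [hset, Fintype.card_piFinset]
    rw [← Finset.prod_mul_prod_compl (insert r T)]
    have h1 : ∏ i ∈ insert r T,
        (if i = r then ({v} : Finset (Fin k)) else if i ∈ T then {v}ᶜ else Finset.univ).card
        = (k - 1) ^ T.card := by
      rw [Finset.prod_insert hrT, if_pos rfl, Finset.card_singleton, one_mul]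
      rw [Finset.prod_congr rfl (g := fun _ => k - 1) (fun i hi => ?_), Finset.prod_const]
      rw [if_neg (ne_of_mem_of_not_mem hi hrT), if_pos hi, Finset.card_compl,
        Finset.card_singleton, Fintype.card_fin]
    have h2 : ∏ i ∈ (insert r T)ᶜ,
        (if i = r then ({v} : Finset (Fin k)) else if i ∈ T then {v}ᶜ else Finset.univ).card
        = k ^ (n - 1 - T.card) := by
      have hcard : (insert r T)ᶜ.card = n - 1 - T.card := by
        rw [Finset.card_compl, Finset.card_insert_of_notMem hrT, Fintype.card_fin]
        omega
      rw [Finset.prod_congr rfl (g := fun _ => k) (fun i hi => ?_), Finset.prod_const, hcard]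
      rw [Finset.mem_compl, Finset.mem_insert] at hi
      push_neg at hi
      rw [if_neg hi.1, if_neg hi.2, Finset.card_univ, Fintype.card_fin]
    rw [h1, h2]
  rw [Finset.sum_congr rfl (fun v _ => hfib v), Finset.sum_const, Finset.card_univ,
    Fintype.card_fin, smul_eq_mul]

/-- Bernoulli-type bound -/
lemma ratio_pow_le {k m : ℕ} (hk : 2 ≤ k) {γ : ℝ} (hγ0 : 0 ≤ γ)
    (h : γ * ((k : ℝ) - 1) ≤ (1 - γ) * m) : ((k : ℝ) - 1) ^ m / (k : ℝ) ^ m ≤ 1 - γ := by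
  have hk1 : (1 : ℝ) ≤ (k : ℝ) - 1 := by
    have : (2 : ℝ) ≤ (k : ℝ) := by exact_mod_cast hk
    linarith
  set a : ℝ := (k : ℝ) - 1 with ha
  have hap : 0 < a := by linarith
  have hk0 : (0 : ℝ) < (k : ℝ) := by linarith
  have hapow : (0 : ℝ) < a ^ m := pow_pos hap m
  have hkpow : (0 : ℝ) < (k : ℝ) ^ m := pow_pos hk0 m
  have hmnn : (0 : ℝ) ≤ (m : ℝ) := Nat.cast_nonneg m
  have h1anneg : (0 : ℝ) ≤ 1 / a := by positivity
  have key : 1 + (m : ℝ) * (1 / a) ≤ (1 + 1 / a) ^ m :=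
    one_add_mul_le_pow (by linarith : (-2 : ℝ) ≤ 1 / a) m
  have h1a : (1 : ℝ) + 1 / a = (k : ℝ) / a := by field_simp [ha]; linarith
  rw [h1a, div_pow] at key
  rw [le_div_iff₀ hapow] at key
  have key2 : (a + m) * a ^ m ≤ a * (k : ℝ) ^ m := by
    have := mul_le_mul_of_nonneg_left key hap.le
    calc (a + m) * a ^ m = a * ((1 + (m : ℝ) * (1 / a)) * a ^ m) := by
          field_simp
      _ ≤ a * (k : ℝ) ^ m := this
  have ham : 0 < a + m := by linarith
  have h3 : a ≤ (1 - γ) * (a + m) := by nlinarith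
  rw [div_le_iff₀ hkpow]
  have h4 : (a + m) * a ^ m ≤ (1 - γ) * (a + m) * (k : ℝ) ^ m := by
    calc (a + m) * a ^ m ≤ a * (k : ℝ) ^ m := key2
      _ ≤ (1 - γ) * (a + m) * (k : ℝ) ^ m := by nlinarith
  nlinarith

lemma Ci_ge {k n m : ℕ} (hk : 2 ≤ k) (hmn : m ≤ n) {γ : ℝ} (hγ0 : 0 ≤ γ)
    (h : γ * ((k : ℝ) - 1) ≤ (1 - γ) * m) :
    γ * (k : ℝ) ^ n ≤ (k : ℝ) ^ n - ((k : ℝ) - 1) ^ m * (k : ℝ) ^ (n - m) := by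
  have hk0 : (0 : ℝ) < (k : ℝ) := by
    have : (2 : ℝ) ≤ (k : ℝ) := by exact_mod_cast hk
    linarith
  have hrat := ratio_pow_le hk hγ0 h
  have h2 : ((k : ℝ) - 1) ^ m * (k : ℝ) ^ (n - m) ≤ (1 - γ) * (k : ℝ) ^ n := by
    rw [pow_sub₀ (k : ℝ) (ne_of_gt hk0) hmn]
    have e : ((k : ℝ) - 1) ^ m * ((k : ℝ) ^ n * ((k : ℝ) ^ m)⁻¹)
        = (((k : ℝ) - 1) ^ m / (k : ℝ) ^ m) * (k : ℝ) ^ n := by ring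
    rw [e]
    exact mul_le_mul_of_nonneg_right hrat (pow_nonneg hk0.le n)
  nlinarith [pow_pos hk0 n]

/-- geometric sum of class sizes -/
lemma sumIcc_pow (i : ℕ) : ∑ j ∈ Finset.Icc 1 i, 2 ^ (j + 1) = 2 ^ (i + 2) - 4 := by
  induction i with
  | zero => simp
  | succ i ih =>
    rw [Finset.sum_Icc_succ_top (by omega), ih]
    have h4 : 4 ≤ 2 ^ (i + 2) := by
      have : 2 ^ 2 ≤ 2 ^ (i + 2) := Nat.pow_le_pow_right (by norm_num) (by omega)
      simpa using this
    have e1 : (2:ℕ) ^ (i + 1 + 1) = 2 ^ (i + 2) := by ring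
    have e2 : (2:ℕ) ^ (i + 1 + 2) = 2 * 2 ^ (i + 2) := by ring
    omega

set_option maxHeartbeats 2000000 in
theorem stmt18 (h_k h_n n k d : ℕ)
    (hhk : 8 < h_k) (hhn : h_k + 1 ≤ h_n)
    (hn : n = 2 ^ (h_n + 2) - 4) (hkdef : k = 2 * (2 ^ (h_k + 1) - 1))
    (hd : n ≤ d)
    (A : Matrix (Fin n) (Fin d) ℝ)
    -- the rows of `A` are pairwise orthogonal
    (horth : ∀ r s : Fin n, r ≠ s → ∑ l, A r l * A s l = 0)
    -- for each `i ∈ {1,…,h_n}`, exactly `2^(i+1)` rows have squared norm `n²/2^(2i)`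
    (hnorm : ∀ i : ℕ, 1 ≤ i → i ≤ h_n →
      Nat.card {r : Fin n // ∑ l, (A r l) ^ 2 = (n : ℝ) ^ 2 / 2 ^ (2 * i)} = 2 ^ (i + 1)) :
    1.095 * (n : ℝ) ^ 2 / 2 ^ (h_k - 2) ≤
      (∑ ps : (Fin n → Fin k) × (Fin n → Bool),
          ⨅ X : {X : Matrix (Fin n) (Fin d) ℝ //
              X.rank ≤ k ∧ rowSpace X ≤ rowSpace (csMatrix ps.1 ps.2 * A)},
            frobSq (X.1 - A))
        / (Fintype.card ((Fin n → Fin k) × (Fin n → Bool)) : ℝ) := by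
  classical
  -- basic numerology
  obtain ⟨e, he3, hke⟩ : ∃ e, 3 ≤ e ∧ h_k = e + 6 := ⟨h_k - 6, by omega, by omega⟩
  have hp32 : 32 ≤ 2 ^ (h_k + 2) := by
    calc (32:ℕ) = 2 ^ 5 := by norm_num
    _ ≤ 2 ^ (h_k + 2) := Nat.pow_le_pow_right (by norm_num) (by omega)
  have hpow_hn : 2 * 2 ^ (h_k + 2) ≤ 2 ^ (h_n + 2) := by
    calc 2 * 2 ^ (h_k + 2) = 2 ^ (h_k + 3) := by ring
    _ ≤ 2 ^ (h_n + 2) := Nat.pow_le_pow_right (by norm_num) (by omega)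
  have hn_ge : 2 * 2 ^ (h_k + 2) - 4 ≤ n := by omega
  have hnpos : 0 < n := by omega
  have hk2 : 2 ≤ k := by
    have : (2:ℕ) ^ 2 ≤ 2 ^ (h_k + 1) := Nat.pow_le_pow_right (by norm_num) (by omega)
    omega
  have hkpos : 0 < k := by omega
  have hkR0 : (0:ℝ) < (k:ℝ) := by exact_mod_cast hkpos
  -- real-power abbreviations
  set X : ℝ := (2:ℝ) ^ e with hX
  have hXpos : 0 < X := by positivity
  have hE8 : (8:ℝ) ≤ X := by
    rw [hX]
    calc (8:ℝ) = 2 ^ 3 := by norm_num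
    _ ≤ 2 ^ e := by
        apply pow_le_pow_right₀ (by norm_num) he3
  have hkRval : (k:ℝ) = 256 * X - 2 := by
    rw [hkdef]
    have h1 : (1:ℕ) ≤ 2 ^ (h_k + 1) := Nat.one_le_two_pow
    push_cast [Nat.cast_sub h1]
    rw [hke, show e + 6 + 1 = e + 7 from rfl, pow_add, hX]
    norm_num
    ring
  -- the classes
  set cls : ℕ → Finset (Fin n) :=
    fun j => Finset.univ.filter (fun r => ∑ l, (A r l) ^ 2 = (n:ℝ)^2 / 2^(2*j)) with hcls
  have hclscard : ∀ j, 1 ≤ j → j ≤ h_n → (cls j).card = 2^(j+1) := by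
    intro j h1 h2
    have hh := hnorm j h1 h2
    rw [Nat.card_eq_fintype_card, Fintype.card_subtype] at hh
    exact hh
  have hval_inj : ∀ j j' : ℕ, j ≠ j' → ((n:ℝ)^2/2^(2*j)) ≠ ((n:ℝ)^2/2^(2*j')) := by
    intro j j' hne heq
    have hn2 : (0:ℝ) < (n:ℝ)^2 := by
      have : (0:ℝ) < (n:ℝ) := by exact_mod_cast hnpos
      positivity
    have h2j : (0:ℝ) < 2^(2*j) := by positivity
    have h2j' : (0:ℝ) < 2^(2*j') := by positivity
    rcases Nat.lt_or_ge j j' with h | h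
    · have hlt := pow_lt_pow_right₀ (one_lt_two : (1:ℝ) < 2) (by omega : 2*j < 2*j')
      have := div_lt_div_of_pos_left hn2 h2j hlt
      linarith
    · have hjj : j' < j := by omega
      have hlt := pow_lt_pow_right₀ (one_lt_two : (1:ℝ) < 2) (by omega : 2*j' < 2*j)
      have := div_lt_div_of_pos_left hn2 h2j' hlt
      linarith
  have hdisj : ∀ j j' : ℕ, j ≠ j' → Disjoint (cls j) (cls j') := by
    intro j j' hne
    refine Finset.disjoint_left.mpr fun r hr hr' => ?_
    rw [hcls] at hr hr'
    simp only [Finset.mem_filter, Finset.mem_univ, true_and] at hr hr'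
    exact hval_inj j j' hne (hr.symm.trans hr')
  -- the heavy sets
  set hvy : ℕ → Finset (Fin n) :=
    fun i => Finset.univ.filter (fun r' => (n:ℝ)^2/2^(2*i) ≤ ∑ l, (A r' l)^2) with hhvy
  have hvycard : ∀ i, 1 ≤ i → i ≤ h_n → 2^(i+2) - 4 ≤ (hvy i).card := by
    intro i h1 h2
    have hsub : (Finset.Icc 1 i).biUnion cls ⊆ hvy i := by
      intro r hr
      rw [Finset.mem_biUnion] at hr
      obtain ⟨j, hj, hrj⟩ := hr
      rw [Finset.mem_Icc] at hj
      rw [hcls] at hrj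
      simp only [Finset.mem_filter, Finset.mem_univ, true_and] at hrj
      rw [hhvy]
      simp only [Finset.mem_filter, Finset.mem_univ, true_and]
      rw [hrj]
      have hle : (2:ℝ)^(2*j) ≤ 2^(2*i) :=
        pow_le_pow_right₀ (by norm_num) (by omega)
      have : (0:ℝ) ≤ (n:ℝ)^2 := by positivity
      exact div_le_div_of_nonneg_left this (by positivity) hle
    have hbu : ((Finset.Icc 1 i).biUnion cls).card = ∑ j ∈ Finset.Icc 1 i, (cls j).card :=
      Finset.card_biUnion (fun j _ j' _ hne => hdisj j j' hne)
    have hcc := Finset.card_le_card hsub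
    rw [hbu, Finset.sum_congr rfl (fun j hj => hclscard j (Finset.mem_Icc.mp hj).1
      (le_trans (Finset.mem_Icc.mp hj).2 (by omega))), sumIcc_pow] at hcc
    exact hcc
  -- collision count lower bound, for rows in class i
  set cnt : Fin n → ℕ := fun r => (Finset.univ.filter (fun p : Fin n → Fin k =>
      ∃ r', r' ≠ r ∧ rnsq A r ≤ rnsq A r' ∧ p r' = p r)).card with hcnt
  have cnt_lb : ∀ i r, 1 ≤ i → i ≤ h_k → r ∈ cls i →
      (k:ℝ)^n - ((k:ℝ)-1)^(2^(i+2)-5) * (k:ℝ)^(n - (2^(i+2)-5))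
        ≤ ((cnt r : ℕ) : ℝ) := by
    intro i r h1 hih hrcls
    simp only [hcnt]
    set m : ℕ := 2^(i+2) - 5 with hm
    have h2i : 8 ≤ 2^(i+2) := by
      calc (8:ℕ) = 2^3 := by norm_num
      _ ≤ 2^(i+2) := Nat.pow_le_pow_right (by norm_num) (by omega)
    have h2ik : 2^(i+2) ≤ 2^(h_k+2) := Nat.pow_le_pow_right (by norm_num) (by omega)
    have hmn : m + 1 ≤ n := by omega
    have e3 : n - m = (n - 1 - m) + 1 := by omega
    have hksub : ((k-1:ℕ):ℝ) = (k:ℝ) - 1 := by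
      rw [Nat.cast_sub (by omega : 1 ≤ k)]
      norm_num
    have hval : rnsq A r = (n:ℝ)^2/2^(2*i) := by
      rw [hcls] at hrcls
      simp only [Finset.mem_filter, Finset.mem_univ, true_and] at hrcls
      exact hrcls
    have hrh : r ∈ hvy i := by
      rw [hhvy]
      simp only [Finset.mem_filter, Finset.mem_univ, true_and]
      exact le_of_eq hval.symm
    have hcard_er : m ≤ ((hvy i).erase r).card := by
      rw [Finset.card_erase_of_mem hrh]
      have := hvycard i h1 (by omega)
      omega
    obtain ⟨T, hTsub, hTcard⟩ := Finset.exists_subset_card_eq hcard_er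
    have hrT : r ∉ T := fun h => (Finset.mem_erase.mp (hTsub h)).1 rfl
    have hsub2 : Finset.univ.filter (fun p : Fin n → Fin k => ∃ r' ∈ T, p r' = p r)
        ⊆ Finset.univ.filter (fun p : Fin n → Fin k =>
            ∃ r', r' ≠ r ∧ rnsq A r ≤ rnsq A r' ∧ p r' = p r) := by
      intro p hp
      simp only [Finset.mem_filter, Finset.mem_univ, true_and] at hp ⊢
      obtain ⟨r', hr'T, hpe⟩ := hp
      have h_er := Finset.mem_erase.mp (hTsub hr'T)
      have hr'h : (n:ℝ)^2/2^(2*i) ≤ rnsq A r' := by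
        have := h_er.2
        rw [hhvy] at this
        simp only [Finset.mem_filter, Finset.mem_univ, true_and] at this
        exact this
      exact ⟨r', h_er.1, by rw [hval]; exact hr'h, hpe⟩
    have hcompl := Finset.card_filter_add_card_filter_not
      (s := (Finset.univ : Finset (Fin n → Fin k)))
      (p := fun p : Fin n → Fin k => ∃ r' ∈ T, p r' = p r)
    have havoid : (Finset.univ.filter
        (fun p : Fin n → Fin k => ¬ ∃ r' ∈ T, p r' = p r)).card
        = k * ((k-1)^m * k^(n-1-m)) := by
      have hiff : ∀ p ∈ (Finset.univ : Finset (Fin n → Fin k)),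
          (¬ ∃ r' ∈ T, p r' = p r) ↔ ∀ r' ∈ T, p r' ≠ p r := by
        intro p _
        push_neg
        rfl
      rw [Finset.filter_congr hiff, count_avoid r T hrT, hTcard]
    have htot : (Finset.univ : Finset (Fin n → Fin k)).card = k^n := by
      rw [Finset.card_univ, Fintype.card_fun, Fintype.card_fin, Fintype.card_fin]
    have hle2 := Finset.card_le_card hsub2
    set cA : ℕ := (Finset.univ.filter (fun p : Fin n → Fin k =>
        ∃ r', r' ≠ r ∧ rnsq A r ≤ rnsq A r' ∧ p r' = p r)).card with hcA
    set cB : ℕ := (Finset.univ.filter (fun p : Fin n → Fin k =>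
        ∃ r' ∈ T, p r' = p r)).card with hcB
    have hnat : k^n ≤ cA + k * ((k-1)^m * k^(n-1-m)) := by
      have h1 : cB + k * ((k-1)^m * k^(n-1-m)) = k ^ n := by
        rw [← havoid, ← htot]
        exact hcompl
      have h2 := Nat.add_le_add_right hle2 (k * ((k-1)^m * k^(n-1-m)))
      exact le_trans (le_of_eq h1.symm) h2
    have hfin : ((k:ℝ))^n ≤ (cA : ℝ)
        + ((k:ℝ)-1)^m * (k:ℝ)^(n-m) := by
      have hc2 := (Nat.cast_le (α := ℝ)).mpr hnat
      push_cast at hc2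
      rw [hksub] at hc2
      calc ((k:ℝ))^n ≤ _ := hc2
      _ = _ + ((k:ℝ)-1)^m * (k:ℝ)^(n-m) := by
          rw [e3, pow_succ]; ring
    linarith
  -- the per-sketch quantity
  set G : (Fin n → Fin k) → ℝ := fun p => ∑ r, (if ∃ r', r' ≠ r ∧ rnsq A r ≤ rnsq A r' ∧
      p r' = p r then rnsq A r / 2 else 0) with hGdef
  have stepA : ∀ ps : (Fin n → Fin k) × (Fin n → Bool),
      G ps.1 ≤ ⨅ X : {X : Matrix (Fin n) (Fin d) ℝ //
          X.rank ≤ k ∧ rowSpace X ≤ rowSpace (csMatrix ps.1 ps.2 * A)},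
        frobSq (X.1 - A) := by
    intro ps
    haveI hne : Nonempty {X : Matrix (Fin n) (Fin d) ℝ //
        X.rank ≤ k ∧ rowSpace X ≤ rowSpace (csMatrix ps.1 ps.2 * A)} := by
      refine ⟨⟨0, ?_, ?_⟩⟩
      · rw [Matrix.rank_zero]
        exact Nat.zero_le k
      · rw [rowSpace]
        apply Submodule.span_le.mpr
        rintro x ⟨i, rfl⟩
        have hz : (0 : Matrix (Fin n) (Fin d) ℝ) i = 0 := rfl
        show (0 : Matrix (Fin n) (Fin d) ℝ) i ∈ _
        rw [hz]
        exact Submodule.zero_mem _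
    exact le_ciInf fun Y => frob_lower A horth ps.1 ps.2 Y.1 Y.2.2
  have stepC : (∑ ps : (Fin n → Fin k) × (Fin n → Bool), G ps.1)
      ≤ ∑ ps : (Fin n → Fin k) × (Fin n → Bool),
        ⨅ X : {X : Matrix (Fin n) (Fin d) ℝ //
            X.rank ≤ k ∧ rowSpace X ≤ rowSpace (csMatrix ps.1 ps.2 * A)},
          frobSq (X.1 - A) :=
    Finset.sum_le_sum fun ps _ => stepA ps
  have stepD : (∑ ps : (Fin n → Fin k) × (Fin n → Bool), G ps.1)
      = (2:ℝ)^n * ∑ p : Fin n → Fin k, G p := by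
    rw [Fintype.sum_prod_type]
    have hbool : ∀ p : Fin n → Fin k, ∑ _s : Fin n → Bool, G p = (2:ℝ)^n * G p := by
      intro p
      rw [Finset.sum_const, Finset.card_univ, Fintype.card_fun, Fintype.card_fin,
        Fintype.card_bool, nsmul_eq_mul]
      push_cast
      ring
    rw [Finset.sum_congr rfl (fun p _ => hbool p), ← Finset.mul_sum]
  have stepE : ∑ p : Fin n → Fin k, G p = ∑ r : Fin n, ((cnt r : ℕ) : ℝ) * (rnsq A r / 2) := by
    simp only [hGdef, hcnt]
    rw [Finset.sum_comm]
    refine Finset.sum_congr rfl fun r _ => ?_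
    rw [← Finset.sum_filter, Finset.sum_const, nsmul_eq_mul]
  -- per-class lower bounds
  have hclass : ∀ u : ℕ, u ≤ 6 → ∀ γ : ℝ, 0 ≤ γ →
      γ * (256*X - 3) ≤ (1-γ) * (X * 2^(u+2) - 5) →
      γ * (k:ℝ)^n * ((n:ℝ)^2 / (X*X*(2:ℝ)^(2*u)) / 2) * (X * 2^(u+1))
        ≤ ∑ r ∈ cls (e+u), ((cnt r : ℕ) : ℝ) * (rnsq A r / 2) := by
    intro u hu γ hγ0 hγcond
    have h1i : 1 ≤ e + u := by omega
    have hik : e + u ≤ h_k := by omega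
    have hccard : (cls (e+u)).card = 2^(e+u+1) := hclscard (e+u) h1i (by omega)
    have h2i8 : (8:ℕ) ≤ 2^(e+u+2) := by
      calc (8:ℕ) = 2^3 := by norm_num
      _ ≤ 2^(e+u+2) := Nat.pow_le_pow_right (by norm_num) (by omega)
    have h2ik : (2:ℕ)^(e+u+2) ≤ 2^(h_k+2) := Nat.pow_le_pow_right (by norm_num) (by omega)
    have hmn : 2^(e+u+2) - 5 ≤ n := by omega
    have hmR : (((2^(e+u+2) - 5 : ℕ) : ℕ) : ℝ) = X * 2^(u+2) - 5 := by
      rw [Nat.cast_sub (by omega : 5 ≤ 2^(e+u+2))]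
      push_cast
      rw [show e + u + 2 = e + (u+2) by omega, pow_add, hX]
    have hk1R : (k:ℝ) - 1 = 256*X - 3 := by rw [hkRval]; ring
    have hCi : γ * (k:ℝ)^n ≤ (k:ℝ)^n
        - ((k:ℝ)-1)^(2^(e+u+2)-5) * (k:ℝ)^(n - (2^(e+u+2)-5)) := by
      apply Ci_ge hk2 hmn hγ0
      rw [hmR, hk1R]
      exact hγcond
    have hrow : ∀ r ∈ cls (e+u),
        γ * (k:ℝ)^n * ((n:ℝ)^2/2^(2*(e+u))/2) ≤ ((cnt r : ℕ) : ℝ) * (rnsq A r / 2) := by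
      intro r hr
      have hval : rnsq A r = (n:ℝ)^2/2^(2*(e+u)) := by
        rw [hcls] at hr
        simp only [Finset.mem_filter, Finset.mem_univ, true_and] at hr
        exact hr
      have hc := cnt_lb (e+u) r h1i hik hr
      rw [hval]
      have hnn : (0:ℝ) ≤ (n:ℝ)^2/2^(2*(e+u))/2 := by positivity
      calc γ * (k:ℝ)^n * ((n:ℝ)^2/2^(2*(e+u))/2)
          ≤ ((k:ℝ)^n - ((k:ℝ)-1)^(2^(e+u+2)-5) * (k:ℝ)^(n - (2^(e+u+2)-5)))
            * ((n:ℝ)^2/2^(2*(e+u))/2) := mul_le_mul_of_nonneg_right hCi hnn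
        _ ≤ _ := mul_le_mul_of_nonneg_right hc hnn
    have hsum := Finset.card_nsmul_le_sum (cls (e+u)) _ _ hrow
    rw [hccard, nsmul_eq_mul] at hsum
    push_cast at hsum
    have hpw1 : (2:ℝ)^(2*(e+u)) = X * X * (2:ℝ)^(2*u) := by
      rw [show 2*(e+u) = e + (e + 2*u) by ring, pow_add, pow_add, hX]
      ring
    have hpw2 : (2:ℝ)^(e+u+1) = X * 2^(u+1) := by
      rw [show e+u+1 = e+(u+1) by omega, pow_add, hX]
    calc γ * (k:ℝ)^n * ((n:ℝ)^2 / (X*X*(2:ℝ)^(2*u)) / 2) * (X * 2^(u+1))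
        = (2:ℝ)^(e+u+1) * (γ * (k:ℝ)^n * ((n:ℝ)^2/2^(2*(e+u))/2)) := by
          rw [hpw1, hpw2]
          ring
      _ ≤ _ := hsum
  -- instantiate the seven classes
  have hc0 := hclass 0 (by norm_num) (27/2080) (by norm_num) (by norm_num; nlinarith [hE8])
  have hc1 := hclass 1 (by norm_num) (27/1056) (by norm_num) (by norm_num; nlinarith [hE8])
  have hc2 := hclass 2 (by norm_num) (27/544) (by norm_num) (by norm_num; nlinarith [hE8])
  have hc3 := hclass 3 (by norm_num) (27/288) (by norm_num) (by norm_num; nlinarith [hE8])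
  have hc4 := hclass 4 (by norm_num) (27/160) (by norm_num) (by norm_num; nlinarith [hE8])
  have hc5 := hclass 5 (by norm_num) (27/96) (by norm_num) (by norm_num; nlinarith [hE8])
  have hc6 := hclass 6 (by norm_num) (27/64) (by norm_num) (by norm_num; nlinarith [hE8])
  -- sum of the classes vs the full sum over rows
  have hUsub : ∑ u ∈ Finset.range 7, ∑ r ∈ cls (e+u), ((cnt r : ℕ) : ℝ) * (rnsq A r / 2)
      ≤ ∑ r : Fin n, ((cnt r : ℕ) : ℝ) * (rnsq A r / 2) := by
    rw [← Finset.sum_biUnion (fun x _ y _ hxy =>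
      hdisj (e+x) (e+y) (fun h => hxy (Nat.add_left_cancel h)))]
    apply Finset.sum_le_sum_of_subset_of_nonneg (Finset.subset_univ _)
    intro r _ _
    have := rnsq_nonneg A r
    positivity
  -- final numerics
  have hQ : (0:ℝ) ≤ (n:ℝ)^2 * (k:ℝ)^n / X := by positivity
  have hexp : ∑ u ∈ Finset.range 7, ∑ r ∈ cls (e+u), ((cnt r : ℕ) : ℝ) * (rnsq A r / 2)
      = (∑ r ∈ cls (e+0), ((cnt r : ℕ) : ℝ) * (rnsq A r / 2))
      + (∑ r ∈ cls (e+1), ((cnt r : ℕ) : ℝ) * (rnsq A r / 2))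
      + (∑ r ∈ cls (e+2), ((cnt r : ℕ) : ℝ) * (rnsq A r / 2))
      + (∑ r ∈ cls (e+3), ((cnt r : ℕ) : ℝ) * (rnsq A r / 2))
      + (∑ r ∈ cls (e+4), ((cnt r : ℕ) : ℝ) * (rnsq A r / 2))
      + (∑ r ∈ cls (e+5), ((cnt r : ℕ) : ℝ) * (rnsq A r / 2))
      + (∑ r ∈ cls (e+6), ((cnt r : ℕ) : ℝ) * (rnsq A r / 2)) := by
    simp [Finset.sum_range_succ]
  have hLsum : 1.095 * (n:ℝ)^2 / (X*16) * (k:ℝ)^n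
      ≤ (27/2080) * (k:ℝ)^n * ((n:ℝ)^2 / (X*X*(2:ℝ)^(2*0)) / 2) * (X * 2^(0+1))
      + (27/1056) * (k:ℝ)^n * ((n:ℝ)^2 / (X*X*(2:ℝ)^(2*1)) / 2) * (X * 2^(1+1))
      + (27/544) * (k:ℝ)^n * ((n:ℝ)^2 / (X*X*(2:ℝ)^(2*2)) / 2) * (X * 2^(2+1))
      + (27/288) * (k:ℝ)^n * ((n:ℝ)^2 / (X*X*(2:ℝ)^(2*3)) / 2) * (X * 2^(3+1))
      + (27/160) * (k:ℝ)^n * ((n:ℝ)^2 / (X*X*(2:ℝ)^(2*4)) / 2) * (X * 2^(4+1))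
      + (27/96) * (k:ℝ)^n * ((n:ℝ)^2 / (X*X*(2:ℝ)^(2*5)) / 2) * (X * 2^(5+1))
      + (27/64) * (k:ℝ)^n * ((n:ℝ)^2 / (X*X*(2:ℝ)^(2*6)) / 2) * (X * 2^(6+1)) := by
    have hXne : X ≠ 0 := ne_of_gt hXpos
    have key : (1.095/16 : ℝ) ≤ 27/2080 + 27/2112 + 27/2176 + 27/2304 + 27/2560
        + 27/3072 + 27/4096 := by norm_num
    calc 1.095 * (n:ℝ)^2 / (X*16) * (k:ℝ)^n
        = (1.095/16) * ((n:ℝ)^2 * (k:ℝ)^n / X) := by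
          field_simp
      _ ≤ (27/2080 + 27/2112 + 27/2176 + 27/2304 + 27/2560 + 27/3072 + 27/4096)
            * ((n:ℝ)^2 * (k:ℝ)^n / X) := mul_le_mul_of_nonneg_right key hQ
      _ = _ := by
          field_simp
          ring
  -- overall chain
  have hcardR : (Fintype.card ((Fin n → Fin k) × (Fin n → Bool)) : ℝ) = (k:ℝ)^n * 2^n := by
    rw [Fintype.card_prod, Fintype.card_fun, Fintype.card_fun, Fintype.card_fin,
      Fintype.card_fin, Fintype.card_bool]
    push_cast
    ring
  rw [hcardR, le_div_iff₀ (by positivity)]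
  have hhk2 : (2:ℝ)^(h_k-2) = X*16 := by
    rw [show h_k - 2 = e + 4 by omega, pow_add, hX]
    norm_num
  have hcore : 1.095 * (n:ℝ)^2 / 2^(h_k-2) * (k:ℝ)^n
      ≤ ∑ r : Fin n, ((cnt r : ℕ) : ℝ) * (rnsq A r / 2) := by
    rw [hhk2]
    have := hexp ▸ hUsub
    linarith [hc0, hc1, hc2, hc3, hc4, hc5, hc6, hLsum]
  calc 1.095 * (n:ℝ)^2 / 2^(h_k-2) * ((k:ℝ)^n * 2^n)
      = (1.095 * (n:ℝ)^2 / 2^(h_k-2) * (k:ℝ)^n) * 2^n := by ring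
    _ ≤ (∑ r : Fin n, ((cnt r : ℕ) : ℝ) * (rnsq A r / 2)) * 2^n := by
        apply mul_le_mul_of_nonneg_right hcore (by positivity)
    _ = (2:ℝ)^n * ∑ p : Fin n → Fin k, G p := by rw [← stepE]; ring
    _ = ∑ ps : (Fin n → Fin k) × (Fin n → Bool), G ps.1 := stepD.symm
    _ ≤ _ := stepC
end
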